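/- arXiv:math/9404208 — 7 statements merged into one kernel-verified Lean document; each statement's English description precedes it below -/
import Mathlib

section
/- Let X be a Banach space, s ∈ ℝ, and x_1,...,x_n ∈ X. Then (1/π ∫_{-π}^{π} ‖Σ_{k=1}^n x_k cos(ks) cos(kt)‖² dt)^{1/2} ≤ (1/π ∫_{-π}^{π} ‖Σ_{k=1}^n x_k cos(kt)‖² dt)^{1/2}. -/
open Real

/-- Lemma 2, first inequality: `‖(x_k cos ks)|𝒞_n‖ ≤ ‖(x_k)|𝒞_n‖`. -/
theorem stmt2 {X : Type*} [NormedAddCommGroup X] [NormedSpace ℝ X]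
    {n : ℕ} (s : ℝ) (x : ℕ → X) :
    Real.sqrt ((1 / π) * ∫ t in (-π)..π,
        ‖∑ k ∈ Finset.Icc 1 n, (Real.cos (k * s) * Real.cos (k * t)) • x k‖ ^ 2) ≤
      Real.sqrt ((1 / π) * ∫ t in (-π)..π,
        ‖∑ k ∈ Finset.Icc 1 n, Real.cos (k * t) • x k‖ ^ 2) := by
  set g : ℝ → X := fun t => ∑ k ∈ Finset.Icc 1 n, Real.cos (k * t) • x k with hg
  have hgcont : Continuous g := by
    apply continuous_finset_sum
    intro k _
    exact (Real.continuous_cos.comp (continuous_const.mul continuous_id)).smul continuous_const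
  set G : ℝ → ℝ := fun t => ‖g t‖ ^ 2 with hG
  have hGcont : Continuous G := (hgcont.norm.pow 2)
  -- periodicity of G
  have hper : Function.Periodic G (2 * π) := by
    intro t
    simp only [hG, hg]
    congr 1
    congr 1
    apply Finset.sum_congr rfl
    intro k _
    congr 1
    have : (k : ℝ) * (t + 2 * π) = k * t + (k : ℤ) * (2 * π) := by push_cast; ring
    rw [this, Real.cos_add_int_mul_two_pi]
  -- pointwise identity
  have hkey : ∀ t : ℝ, ∑ k ∈ Finset.Icc 1 n, (Real.cos (k * s) * Real.cos (k * t)) • x k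
      = (2 : ℝ)⁻¹ • (g (t + s) + g (t - s)) := by
    intro t
    simp only [hg, smul_add, Finset.smul_sum, ← Finset.sum_add_distrib]
    apply Finset.sum_congr rfl
    intro k _
    rw [smul_smul, smul_smul, ← add_smul]
    congr 1
    have h1 : (k : ℝ) * (t + s) = k * t + k * s := by ring
    have h2 : (k : ℝ) * (t - s) = k * t - k * s := by ring
    rw [h1, h2, Real.cos_add, Real.cos_sub]
    ring
  have hFcont : Continuous fun t => ‖∑ k ∈ Finset.Icc 1 n,
      (Real.cos (k * s) * Real.cos (k * t)) • x k‖ ^ 2 := by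
    apply Continuous.pow
    apply Continuous.norm
    apply continuous_finset_sum
    intro k _
    exact ((continuous_const.mul (Real.continuous_cos.comp
      (continuous_const.mul continuous_id)))).smul continuous_const
  -- pointwise bound
  have hpt : ∀ t : ℝ, ‖∑ k ∈ Finset.Icc 1 n, (Real.cos (k * s) * Real.cos (k * t)) • x k‖ ^ 2
      ≤ (G (t + s) + G (t - s)) / 2 := by
    intro t
    rw [hkey t]
    have h1 : ‖(2 : ℝ)⁻¹ • (g (t + s) + g (t - s))‖ ≤ (‖g (t + s)‖ + ‖g (t - s)‖) / 2 := by
      rw [norm_smul]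
      have := norm_add_le (g (t + s)) (g (t - s))
      simp only [norm_inv, Real.norm_two]
      linarith
    have h2 : (0 : ℝ) ≤ ‖(2 : ℝ)⁻¹ • (g (t + s) + g (t - s))‖ := norm_nonneg _
    have h3 : (0 : ℝ) ≤ ‖g (t + s)‖ := norm_nonneg _
    have h4 : (0 : ℝ) ≤ ‖g (t - s)‖ := norm_nonneg _
    simp only [hG]
    nlinarith [sq_nonneg (‖g (t + s)‖ - ‖g (t - s)‖)]
  -- translation invariance
  have htrans : ∀ c : ℝ, (∫ t in (-π)..π, G (t + c)) = ∫ t in (-π)..π, G t := by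
    intro c
    rw [intervalIntegral.integral_comp_add_right]
    have := hper.intervalIntegral_add_eq (-π + c) (-π)
    have e1 : -π + c + 2 * π = π + c := by ring
    have e2 : -π + 2 * π = π := by ring
    rwa [e1, e2] at this
  have hab : (-π : ℝ) ≤ π := by linarith [Real.pi_pos]
  have hle : (∫ t in (-π)..π, ‖∑ k ∈ Finset.Icc 1 n,
      (Real.cos (k * s) * Real.cos (k * t)) • x k‖ ^ 2)
      ≤ ∫ t in (-π)..π, G t := by
    have hmid : (∫ t in (-π)..π, (G (t + s) + G (t - s)) / 2) = ∫ t in (-π)..π, G t := by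
      have hi1 : IntervalIntegrable (fun t => G (t + s)) MeasureTheory.volume (-π) π :=
        (hGcont.comp (continuous_id.add continuous_const)).intervalIntegrable _ _
      have hi2 : IntervalIntegrable (fun t => G (t - s)) MeasureTheory.volume (-π) π :=
        (hGcont.comp (continuous_id.sub continuous_const)).intervalIntegrable _ _
      have : (∫ t in (-π)..π, (G (t + s) + G (t - s)) / 2)
          = ((∫ t in (-π)..π, G (t + s)) + ∫ t in (-π)..π, G (t - s)) / 2 := by
        rw [← intervalIntegral.integral_add hi1 hi2, ← intervalIntegral.integral_div]
      rw [this, htrans s]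
      have : (∫ t in (-π)..π, G (t - s)) = ∫ t in (-π)..π, G t := by
        have := htrans (-s)
        simpa [sub_eq_add_neg] using this
      rw [this]
      ring
    calc (∫ t in (-π)..π, ‖∑ k ∈ Finset.Icc 1 n,
          (Real.cos (k * s) * Real.cos (k * t)) • x k‖ ^ 2)
        ≤ ∫ t in (-π)..π, (G (t + s) + G (t - s)) / 2 := by
          apply intervalIntegral.integral_mono_on hab
          · exact hFcont.intervalIntegrable _ _
          · exact (((hGcont.comp (continuous_id.add continuous_const)).add
              (hGcont.comp (continuous_id.sub continuous_const))).div_const 2).intervalIntegrable _ _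
          · intro t _; exact hpt t
      _ = ∫ t in (-π)..π, G t := hmid
  apply Real.sqrt_le_sqrt
  apply mul_le_mul_of_nonneg_left hle
  positivity
end

section
/- Let X be a Banach space, s ∈ ℝ, and x_1,...,x_n ∈ X. Then (1/π ∫_{-π}^{π} ‖Σ_{k=1}^n x_k sin(ks) sin(kt)‖² dt)^{1/2} ≤ (1/π ∫_{-π}^{π} ‖Σ_{k=1}^n x_k cos(kt)‖² dt)^{1/2}. -/
open Real

/-- Lemma 2: `‖(x_k sin ks)|𝒮_n‖ ≤ ‖(x_k)|𝒞_n‖`. -/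
theorem stmt3 {X : Type*} [NormedAddCommGroup X] [NormedSpace ℝ X]
    {n : ℕ} (s : ℝ) (x : ℕ → X) :
    Real.sqrt ((1 / π) * ∫ t in (-π)..π,
        ‖∑ k ∈ Finset.Icc 1 n, (Real.sin (k * s) * Real.sin (k * t)) • x k‖ ^ 2) ≤
      Real.sqrt ((1 / π) * ∫ t in (-π)..π,
        ‖∑ k ∈ Finset.Icc 1 n, Real.cos (k * t) • x k‖ ^ 2) := by
  set F : ℝ → X := fun t => ∑ k ∈ Finset.Icc 1 n, Real.cos (k * t) • x k with hF
  set h : ℝ → ℝ := fun t => ‖F t‖ ^ 2 with hh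
  have hFcont : Continuous F := by
    apply continuous_finset_sum
    intro k _
    exact (Real.continuous_cos.comp (continuous_const.mul continuous_id)).smul continuous_const
  have hhcont : Continuous h := (hFcont.norm.pow 2)
  -- periodicity of h with period 2π
  have hper : Function.Periodic h (2 * π) := by
    intro t
    simp only [hh, hF]
    have hc : ∀ k ∈ Finset.Icc 1 n,
        Real.cos (k * (t + 2 * π)) • x k = Real.cos (k * t) • x k := by
      intro k _
      congr 1
      rw [mul_add]
      have := (Real.cos_periodic.nat_mul k) (k * t)
      simpa [mul_comm] using this
    rw [Finset.sum_congr rfl hc]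
  -- pointwise identity
  have key : ∀ t : ℝ, ∑ k ∈ Finset.Icc 1 n, (Real.sin (k * s) * Real.sin (k * t)) • x k
      = (2:ℝ)⁻¹ • (F (t - s) - F (t + s)) := by
    intro t
    simp only [hF]
    rw [← Finset.sum_sub_distrib, Finset.smul_sum]
    apply Finset.sum_congr rfl
    intro k _
    rw [← sub_smul, smul_smul]
    congr 1
    have h1 : (k:ℝ) * (t - s) = k * t - k * s := by ring
    have h2 : (k:ℝ) * (t + s) = k * t + k * s := by ring
    rw [h1, h2, Real.cos_sub, Real.cos_add]
    ring
  -- pointwise bound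
  have hbound : ∀ t : ℝ, ‖∑ k ∈ Finset.Icc 1 n,
      (Real.sin (k * s) * Real.sin (k * t)) • x k‖ ^ 2 ≤ (h (t - s) + h (t + s)) / 2 := by
    intro t
    rw [key t]
    simp only [hh]
    have h1 : ‖(2:ℝ)⁻¹ • (F (t - s) - F (t + s))‖ ≤ (‖F (t - s)‖ + ‖F (t + s)‖) / 2 := by
      rw [norm_smul]
      have := norm_sub_le (F (t - s)) (F (t + s))
      simp only [norm_inv, Real.norm_ofNat]
      linarith
    have h2 : (0:ℝ) ≤ ‖(2:ℝ)⁻¹ • (F (t - s) - F (t + s))‖ := norm_nonneg _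
    nlinarith [norm_nonneg (F (t - s)), norm_nonneg (F (t + s)),
      sq_nonneg (‖F (t - s)‖ - ‖F (t + s)‖)]
  -- translation invariance
  have htrans : ∀ c : ℝ, (∫ t in (-π)..π, h (t + c)) = ∫ t in (-π)..π, h t := by
    intro c
    rw [intervalIntegral.integral_comp_add_right h c]
    have e1 : -π + c = (-π + c) := rfl
    have := hper.intervalIntegral_add_eq (-π + c) (-π)
    have hpi : -π + 2 * π = π := by ring
    rw [hpi] at this
    calc (∫ t in (-π + c)..(π + c), h t)
        = ∫ t in (-π + c)..(-π + c + 2 * π), h t := by ring_nf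
      _ = ∫ t in (-π)..π, h t := by rw [this]
  -- integral inequality
  have hint : (∫ t in (-π)..π, ‖∑ k ∈ Finset.Icc 1 n,
      (Real.sin (k * s) * Real.sin (k * t)) • x k‖ ^ 2) ≤ ∫ t in (-π)..π, h t := by
    have hle : (-π : ℝ) ≤ π := by linarith [Real.pi_pos]
    have hGcont : Continuous fun t => ‖∑ k ∈ Finset.Icc 1 n,
        (Real.sin (k * s) * Real.sin (k * t)) • x k‖ ^ 2 := by
      apply Continuous.pow
      apply Continuous.norm
      apply continuous_finset_sum
      intro k _
      exact (continuous_const.mul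
        (Real.continuous_sin.comp (continuous_const.mul continuous_id))).smul continuous_const
    have step1 : (∫ t in (-π)..π, ‖∑ k ∈ Finset.Icc 1 n,
        (Real.sin (k * s) * Real.sin (k * t)) • x k‖ ^ 2)
        ≤ ∫ t in (-π)..π, (h (t - s) + h (t + s)) / 2 := by
      apply intervalIntegral.integral_mono_on hle
      · exact hGcont.intervalIntegrable _ _
      · exact (((hhcont.comp (continuous_id.sub continuous_const)).add
          (hhcont.comp (continuous_id.add continuous_const))).div_const 2).intervalIntegrable _ _
      · intro t _
        exact hbound t
    have step2 : (∫ t in (-π)..π, (h (t - s) + h (t + s)) / 2)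
        = ∫ t in (-π)..π, h t := by
      have i1 : IntervalIntegrable (fun t => h (t - s)) MeasureTheory.volume (-π) π :=
        (hhcont.comp (continuous_id.sub continuous_const)).intervalIntegrable _ _
      have i2 : IntervalIntegrable (fun t => h (t + s)) MeasureTheory.volume (-π) π :=
        (hhcont.comp (continuous_id.add continuous_const)).intervalIntegrable _ _
      have : (∫ t in (-π)..π, (h (t - s) + h (t + s)) / 2)
          = ((∫ t in (-π)..π, h (t - s)) + ∫ t in (-π)..π, h (t + s)) / 2 := by
        rw [← intervalIntegral.integral_add i1 i2, ← intervalIntegral.integral_div]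
      rw [this]
      have t1 : (∫ t in (-π)..π, h (t - s)) = ∫ t in (-π)..π, h t := by
        have := htrans (-s)
        simpa [sub_eq_add_neg] using this
      have t2 : (∫ t in (-π)..π, h (t + s)) = ∫ t in (-π)..π, h t := htrans s
      rw [t1, t2]
      ring
    linarith
  apply Real.sqrt_le_sqrt
  apply mul_le_mul_of_nonneg_left hint
  positivity
end

section
/- Let X be a Banach space and x_1,...,x_n ∈ X. Then (1/π² ∫_{-π}^{π}∫_{-π}^{π} ‖Σ_{k=1}^n x_k sin(ks) sin(kt)‖² dt ds) ≤ 2 · (1/π ∫_{-π}^{π} ‖Σ_{k=1}^n x_k cos(kt)‖² dt). -/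
open Real

/-- Lemma 3 (integrated form): `‖(x_k)|𝒮_n⊗𝒮_n‖² ≤ 2 ‖(x_k)|𝒞_n‖²`. -/
theorem stmt5 {X : Type*} [NormedAddCommGroup X] [NormedSpace ℝ X]
    {n : ℕ} (x : ℕ → X) :
    (1 / π ^ 2) * ∫ s in (-π)..π, ∫ t in (-π)..π,
        ‖∑ k ∈ Finset.Icc 1 n, (Real.sin (k * s) * Real.sin (k * t)) • x k‖ ^ 2 ≤
      2 * ((1 / π) * ∫ t in (-π)..π,
        ‖∑ k ∈ Finset.Icc 1 n, Real.cos (k * t) • x k‖ ^ 2) := by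
  set F : ℝ → X := fun u => ∑ k ∈ Finset.Icc 1 n, Real.cos (k * u) • x k with hF
  have hFcont : Continuous F := by
    apply continuous_finset_sum
    intro k _
    exact ((Real.continuous_cos.comp (continuous_const.mul continuous_id)).smul continuous_const)
  set g : ℝ → ℝ := fun u => ‖F u‖ ^ 2 with hg
  have hgcont : Continuous g := (hFcont.norm.pow 2)
  have hgper : Function.Periodic g (2 * π) := by
    intro u
    have : F (u + 2 * π) = F u := by
      apply Finset.sum_congr rfl
      intro k _
      congr 1
      have : (k : ℝ) * (u + 2 * π) = k * u + k * (2 * π) := by ring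
      rw [this, Real.cos_add_nat_mul_two_pi]
    simp only [hg, this]
  set C : ℝ := ∫ u in (-π)..π, g u with hC
  set H : ℝ → ℝ → X := fun s t => ∑ k ∈ Finset.Icc 1 n,
    (Real.sin (k * s) * Real.sin (k * t)) • x k with hH
  have hHcont : Continuous (Function.uncurry fun s t => ‖H s t‖ ^ 2) := by
    apply Continuous.pow
    apply Continuous.norm
    apply continuous_finset_sum
    intro k _
    apply Continuous.smul _ continuous_const
    exact ((Real.continuous_sin.comp (continuous_const.mul continuous_fst)).mul
      (Real.continuous_sin.comp (continuous_const.mul continuous_snd)))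
  -- pointwise bound
  have hpt : ∀ s t : ℝ, ‖H s t‖ ^ 2 ≤ (g (s - t) + g (s + t)) / 2 := by
    intro s t
    have hsum : F (s - t) - F (s + t) = (2 : ℝ) • H s t := by
      simp only [hF, hH, Finset.smul_sum, ← Finset.sum_sub_distrib]
      apply Finset.sum_congr rfl
      intro k _
      rw [← sub_smul, smul_smul]
      congr 1
      have h1 : (k : ℝ) * (s - t) = k * s - k * t := by ring
      have h2 : (k : ℝ) * (s + t) = k * s + k * t := by ring
      rw [h1, h2, Real.cos_sub, Real.cos_add]
      ring
    have hnorm : (2 : ℝ) * ‖H s t‖ ≤ ‖F (s - t)‖ + ‖F (s + t)‖ := by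
      calc (2 : ℝ) * ‖H s t‖ = ‖(2 : ℝ) • H s t‖ := by
            rw [norm_smul]; simp
        _ = ‖F (s - t) - F (s + t)‖ := by rw [hsum]
        _ ≤ ‖F (s - t)‖ + ‖F (s + t)‖ := norm_sub_le _ _
    have h0 : (0 : ℝ) ≤ ‖H s t‖ := norm_nonneg _
    simp only [hg]
    nlinarith [sq_nonneg (‖F (s - t)‖ - ‖F (s + t)‖), norm_nonneg (F (s - t)),
      norm_nonneg (F (s + t))]
  have hπ : (0 : ℝ) < π := Real.pi_pos
  have hle : (-π : ℝ) ≤ π := by linarith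
  -- inner integral bound
  have hinner : ∀ s : ℝ, (∫ t in (-π)..π, ‖H s t‖ ^ 2) ≤ C := by
    intro s
    have hint1 : IntervalIntegrable (fun t => ‖H s t‖ ^ 2) MeasureTheory.volume (-π) π := by
      apply Continuous.intervalIntegrable
      apply Continuous.pow
      apply Continuous.norm
      apply continuous_finset_sum
      intro k _
      exact ((Real.continuous_sin.comp (continuous_const.mul continuous_const)).mul
        (Real.continuous_sin.comp (continuous_const.mul continuous_id))).smul continuous_const
    have hint2 : IntervalIntegrable (fun t => (g (s - t) + g (s + t)) / 2)
        MeasureTheory.volume (-π) π := by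
      apply Continuous.intervalIntegrable
      exact (((hgcont.comp (continuous_const.sub continuous_id)).add
        (hgcont.comp (continuous_const.add continuous_id))).div_const 2)
    have step1 : (∫ t in (-π)..π, ‖H s t‖ ^ 2) ≤
        ∫ t in (-π)..π, (g (s - t) + g (s + t)) / 2 := by
      apply intervalIntegral.integral_mono_on hle hint1 hint2
      intro t _
      exact hpt s t
    have hi1 : IntervalIntegrable (fun t => g (s - t)) MeasureTheory.volume (-π) π :=
      (hgcont.comp (continuous_const.sub continuous_id)).intervalIntegrable _ _
    have hi2 : IntervalIntegrable (fun t => g (s + t)) MeasureTheory.volume (-π) π :=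
      (hgcont.comp (continuous_const.add continuous_id)).intervalIntegrable _ _
    have e1 : (∫ t in (-π)..π, g (s - t)) = C := by
      rw [intervalIntegral.integral_comp_sub_left g s]
      have h1 : s - π = s - π := rfl
      have h2 : s - -π = (s - π) + 2 * π := by ring
      rw [h2]
      have := hgper.intervalIntegral_add_eq (s - π) (-π)
      rw [this]
      congr 1
      ring
    have e2 : (∫ t in (-π)..π, g (s + t)) = C := by
      rw [intervalIntegral.integral_comp_add_left g s]
      have h2 : s + π = (s + -π) + 2 * π := by ring
      rw [h2]
      have := hgper.intervalIntegral_add_eq (s + -π) (-π)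
      rw [this]
      congr 1
      ring
    have step2 : (∫ t in (-π)..π, (g (s - t) + g (s + t)) / 2) = C := by
      have : (∫ t in (-π)..π, (g (s - t) + g (s + t)) / 2)
          = ((∫ t in (-π)..π, g (s - t)) + ∫ t in (-π)..π, g (s + t)) / 2 := by
        rw [← intervalIntegral.integral_add hi1 hi2, intervalIntegral.integral_div]
      rw [this, e1, e2]
      ring
    linarith
  -- outer integral
  have houter : (∫ s in (-π)..π, ∫ t in (-π)..π, ‖H s t‖ ^ 2) ≤ 2 * π * C := by
    have hintout : IntervalIntegrable (fun s => ∫ t in (-π)..π, ‖H s t‖ ^ 2)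
        MeasureTheory.volume (-π) π := by
      apply Continuous.intervalIntegrable
      exact intervalIntegral.continuous_parametric_intervalIntegral_of_continuous' hHcont (-π) π
    have : (∫ s in (-π)..π, ∫ t in (-π)..π, ‖H s t‖ ^ 2) ≤ ∫ _ in (-π)..π, C := by
      apply intervalIntegral.integral_mono_on hle hintout
        (intervalIntegrable_const)
      intro s _
      exact hinner s
    have hc : (∫ _ in (-π)..π, C) = 2 * π * C := by
      rw [intervalIntegral.integral_const, smul_eq_mul]
      ring
    linarith [this, hc.le, hc.ge]
  -- conclude
  have hπ2 : (0 : ℝ) < π ^ 2 := by positivity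
  have : (1 / π ^ 2) * (∫ s in (-π)..π, ∫ t in (-π)..π, ‖H s t‖ ^ 2)
      ≤ (1 / π ^ 2) * (2 * π * C) := by
    apply mul_le_mul_of_nonneg_left houter
    positivity
  calc (1 / π ^ 2) * ∫ s in (-π)..π, ∫ t in (-π)..π, ‖H s t‖ ^ 2
      ≤ (1 / π ^ 2) * (2 * π * C) := this
    _ = 2 * ((1 / π) * C) := by
        field_simp
end

section
/- Let X, Y be Banach spaces, T : X → Y a bounded linear operator, and c ≥ 0 a constant such that ‖(T y_k)|S_n‖ ≤ c ‖(y_k)|C_n‖ for all y_1,...,y_n ∈ X (where ‖(y_k)|S_n‖² = (2/π)∫_0^π ‖Σ y_k sin kt‖² dt and ‖(y_k)|C_n‖² = (2/π)∫_0^π ‖Σ y_k cos kt‖² dt). Then for all x_1,...,x_n ∈ X: (2/π ∫_{π/3}^{2π/3} ‖Σ_{k=1}^n T x_k cos(kt)‖² dt)^{1/2} ≤ 4c · ‖(x_k)|S_n‖. -/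
open Real intervalIntegral MeasureTheory Filter

namespace S9

lemma cs_aux {a b : ℝ} (hab : a ≤ b) {u v : ℝ → ℝ} (hu : Continuous u) (hv : Continuous v) :
    ∫ t in a..b, u t * v t ≤
      Real.sqrt (∫ t in a..b, u t ^ 2) * Real.sqrt (∫ t in a..b, v t ^ 2) := by
  set U := ∫ t in a..b, u t ^ 2 with hU
  set V := ∫ t in a..b, v t ^ 2 with hV
  have hUnn : 0 ≤ U := intervalIntegral.integral_nonneg hab (fun t _ => sq_nonneg _)
  have hVnn : 0 ≤ V := intervalIntegral.integral_nonneg hab (fun t _ => sq_nonneg _)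
  have key : ∀ l : ℝ, 0 < l → ∫ t in a..b, u t * v t ≤ (l * U + V / l) / 2 := by
    intro l hl
    have hpt : ∀ t ∈ Set.Icc a b, u t * v t ≤ (l * u t ^ 2 + v t ^ 2 / l) / 2 := by
      intro t _
      have h1 : 0 ≤ (l * u t - v t)^2 := sq_nonneg _
      have h2 : v t ^ 2 / l * l = v t ^ 2 := div_mul_cancel₀ _ hl.ne'
      nlinarith [mul_pos hl hl, hl]
    calc ∫ t in a..b, u t * v t ≤ ∫ t in a..b, (l * u t ^ 2 + v t ^ 2 / l) / 2 := by
          apply intervalIntegral.integral_mono_on hab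
            ((hu.mul hv).intervalIntegrable _ _)
            ((Continuous.intervalIntegrable (by continuity) _ _)) hpt
      _ = (l * U + V / l) / 2 := by
          rw [intervalIntegral.integral_div, intervalIntegral.integral_add
            (f := fun t => l * u t ^ 2) (g := fun t => v t ^ 2 / l)
            (((continuous_const.mul (hu.pow 2))).intervalIntegrable _ _)
            (((hv.pow 2).div_const l).intervalIntegrable _ _),
            intervalIntegral.integral_const_mul, intervalIntegral.integral_div]
  have key2 : ∀ ε : ℝ, ε ∈ Set.Ioi (0:ℝ) →
      ∫ t in a..b, u t * v t ≤ Real.sqrt (U + ε) * Real.sqrt (V + ε) := by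
    intro ε hε
    rw [Set.mem_Ioi] at hε
    have hU' : 0 < U + ε := by linarith
    have hV' : 0 < V + ε := by linarith
    set l := Real.sqrt (V + ε) / Real.sqrt (U + ε) with hl
    have hlpos : 0 < l := div_pos (Real.sqrt_pos.2 hV') (Real.sqrt_pos.2 hU')
    refine (key l hlpos).trans ?_
    have e1 : l * (U + ε) = Real.sqrt (V + ε) * Real.sqrt (U + ε) := by
      rw [hl, div_mul_eq_mul_div, mul_div_assoc, Real.div_sqrt]
    have e2 : (V + ε) / l = Real.sqrt (V + ε) * Real.sqrt (U + ε) := by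
      rw [hl, div_div_eq_mul_div, mul_comm, mul_div_assoc, Real.div_sqrt, mul_comm]
    have step : (l * U + V / l)/2 ≤ (l*(U+ε) + (V+ε)/l)/2 := by gcongr <;> linarith
    refine step.trans ?_
    calc (l*(U+ε) + (V+ε)/l)/2 = Real.sqrt (V+ε) * Real.sqrt (U+ε) := by rw [e1, e2]; ring
      _ = Real.sqrt (U+ε) * Real.sqrt (V+ε) := mul_comm _ _
      _ ≤ _ := le_rfl
  have cont : Tendsto (fun ε : ℝ => Real.sqrt (U+ε) * Real.sqrt (V+ε))
      (nhdsWithin 0 (Set.Ioi 0)) (nhds (Real.sqrt U * Real.sqrt V)) := by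
    have hcont : Continuous fun ε : ℝ => Real.sqrt (U+ε) * Real.sqrt (V+ε) := by continuity
    have h2 := (hcont.tendsto 0).mono_left (nhdsWithin_le_nhds (s := Set.Ioi (0:ℝ)))
    simpa using h2
  exact ge_of_tendsto cont (eventually_nhdsWithin_of_forall key2)

lemma minkowski {E : Type*} [NormedAddCommGroup E] {a b : ℝ} (hab : a ≤ b) {f g : ℝ → E}
    (hf : Continuous f) (hg : Continuous g) :
    Real.sqrt (∫ t in a..b, ‖f t + g t‖^2) ≤
      Real.sqrt (∫ t in a..b, ‖f t‖^2) + Real.sqrt (∫ t in a..b, ‖g t‖^2) := by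
  set F := ∫ t in a..b, ‖f t‖^2 with hF
  set G := ∫ t in a..b, ‖g t‖^2 with hG
  have hFnn : 0 ≤ F := intervalIntegral.integral_nonneg hab (fun t _ => sq_nonneg _)
  have hGnn : 0 ≤ G := intervalIntegral.integral_nonneg hab (fun t _ => sq_nonneg _)
  have hR : 0 ≤ Real.sqrt F + Real.sqrt G := by positivity
  have key : (∫ t in a..b, ‖f t + g t‖^2) ≤ (Real.sqrt F + Real.sqrt G)^2 := by
    have cs := cs_aux hab (u := fun t => ‖f t‖) (v := fun t => ‖g t‖) hf.norm hg.norm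
    calc (∫ t in a..b, ‖f t + g t‖^2)
        ≤ ∫ t in a..b, (‖f t‖^2 + 2 * (‖f t‖ * ‖g t‖) + ‖g t‖^2) := by
          apply intervalIntegral.integral_mono_on hab
            (((hf.add hg).norm.pow 2).intervalIntegrable _ _)
            ((Continuous.intervalIntegrable (by continuity) _ _))
          intro t _
          have := norm_add_le (f t) (g t)
          show ‖f t + g t‖ ^ 2 ≤ ‖f t‖^2 + 2 * (‖f t‖ * ‖g t‖) + ‖g t‖^2
          nlinarith [norm_nonneg (f t), norm_nonneg (g t), norm_nonneg (f t + g t)]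
      _ = F + 2 * (∫ t in a..b, ‖f t‖ * ‖g t‖) + G := by
          rw [intervalIntegral.integral_add
              (f := fun t => ‖f t‖^2 + 2 * (‖f t‖ * ‖g t‖)) (g := fun t => ‖g t‖^2)
              (Continuous.intervalIntegrable (by continuity) _ _)
              ((hg.norm.pow 2).intervalIntegrable _ _),
            intervalIntegral.integral_add (f := fun t => ‖f t‖^2)
              (g := fun t => 2 * (‖f t‖ * ‖g t‖)) ((hf.norm.pow 2).intervalIntegrable _ _)
              (Continuous.intervalIntegrable (by continuity) _ _),
            intervalIntegral.integral_const_mul]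
      _ ≤ F + 2 * (Real.sqrt F * Real.sqrt G) + G := by rw [← hF, ← hG] at cs; nlinarith [cs]
      _ = (Real.sqrt F + Real.sqrt G)^2 := by
          rw [add_sq, Real.sq_sqrt hFnn, Real.sq_sqrt hGnn]; ring
  calc Real.sqrt (∫ t in a..b, ‖f t + g t‖^2) ≤ Real.sqrt ((Real.sqrt F + Real.sqrt G)^2) :=
        Real.sqrt_le_sqrt key
    _ = _ := Real.sqrt_sq hR

end S9

namespace S9b
open S9

-- ∫_0^π cos (r t) dt = 0 when r ≠ 0 and sin (r π) = 0
lemma int_cos_zero {r : ℝ} (hr : r ≠ 0) (hs : Real.sin (r * π) = 0) :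
    ∫ t in (0:ℝ)..π, Real.cos (r * t) = 0 := by
  rw [intervalIntegral.integral_comp_mul_left (f := Real.cos) hr]
  simp [integral_cos, hs]

lemma int_cos_diff (j k : ℕ) (hjk : j ≠ k) :
    ∫ t in (0:ℝ)..π, Real.cos (((j:ℝ) - k) * t) = 0 := by
  apply int_cos_zero
  · intro hh
    apply hjk
    exact_mod_cast sub_eq_zero.1 hh
  · have h := Real.sin_int_mul_pi ((j:ℤ) - k)
    push_cast at h
    exact h

lemma int_cos_sum (j k : ℕ) (hj : j ≠ 0) :
    ∫ t in (0:ℝ)..π, Real.cos (((j:ℝ) + k) * t) = 0 := by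
  apply int_cos_zero
  · positivity
  · have h := Real.sin_int_mul_pi ((j:ℤ) + k)
    push_cast at h
    exact h

lemma int_sin_mul_sin {j k : ℕ} (hj : j ≠ 0) (hjk : j ≠ k) :
    ∫ t in (0:ℝ)..π, Real.sin (j * t) * Real.sin (k * t) = 0 := by
  have hpt : ∀ t : ℝ, Real.sin (j * t) * Real.sin (k * t)
      = (Real.cos (((j:ℝ) - k) * t) - Real.cos (((j:ℝ) + k) * t)) / 2 := by
    intro t
    have h1 := Real.cos_sub ((j:ℝ)*t) ((k:ℝ)*t)
    have h2 := Real.cos_add ((j:ℝ)*t) ((k:ℝ)*t)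
    have e1 : ((j:ℝ) - k) * t = (j:ℝ)*t - (k:ℝ)*t := by ring
    have e2 : ((j:ℝ) + k) * t = (j:ℝ)*t + (k:ℝ)*t := by ring
    rw [e1, e2, h1, h2]; ring
  rw [intervalIntegral.integral_congr (g := fun t => (Real.cos (((j:ℝ) - k) * t) - Real.cos (((j:ℝ) + k) * t)) / 2) (fun t _ => hpt t)]
  rw [intervalIntegral.integral_div, intervalIntegral.integral_sub
    (Continuous.intervalIntegrable (by continuity) _ _)
    (Continuous.intervalIntegrable (by continuity) _ _),
    int_cos_diff j k hjk, int_cos_sum j k hj]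
  norm_num

lemma int_sin_sq (m : ℕ) (hm : m ≠ 0) :
    ∫ t in (0:ℝ)..π, Real.sin (m * t) ^ 2 = π / 2 := by
  have hm' : (m:ℝ) ≠ 0 := Nat.cast_ne_zero.2 hm
  rw [intervalIntegral.integral_comp_mul_left (f := fun t => Real.sin t ^ 2) hm']
  rw [smul_eq_mul]
  rw [mul_zero, integral_sin_sq]
  have : Real.sin ((m:ℝ) * π) = 0 := by
    rw [Real.sin_nat_mul_pi]
  rw [this]
  field_simp
  simp

lemma int_cos_sq (m : ℕ) (hm : m ≠ 0) :
    ∫ t in (0:ℝ)..π, Real.cos (m * t) ^ 2 = π / 2 := by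
  have hm' : (m:ℝ) ≠ 0 := Nat.cast_ne_zero.2 hm
  rw [intervalIntegral.integral_comp_mul_left (f := fun t => Real.cos t ^ 2) hm']
  rw [smul_eq_mul, mul_zero, integral_cos_sq]
  have : Real.sin ((m:ℝ) * π) = 0 := Real.sin_nat_mul_pi m
  rw [this]
  field_simp
  simp

end S9b

namespace S9c
open S9 S9b

lemma two_sin_cos (t u : ℝ) : 2 * Real.sin t * Real.cos u = Real.sin (u + t) - Real.sin (u - t) := by
  rw [Real.sin_add, Real.sin_sub]; ring

lemma two_sin_sin (t u : ℝ) : 2 * Real.sin t * Real.sin u = Real.cos (u - t) - Real.cos (u + t) := by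
  rw [Real.cos_sub, Real.cos_add]; ring

variable {E : Type*} [NormedAddCommGroup E] [NormedSpace ℝ E]

lemma abel_cos (z : ℕ → E) (hz0 : z 0 = 0) (n : ℕ) (t : ℝ) :
    ∑ k ∈ Finset.Icc 1 n, (2 * Real.sin t * Real.cos (k * t)) • z k
      = ∑ k ∈ Finset.Icc 1 n, Real.sin (k * t) • (z (k-1) - z (k+1))
        + Real.sin ((n+1 : ℕ) * t) • z n + Real.sin (n * t) • z (n+1) := by
  induction n with
  | zero => simp [hz0]
  | succ n ih =>
    rw [Finset.sum_Icc_succ_top (by omega : 1 ≤ n + 1),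
        Finset.sum_Icc_succ_top (by omega : 1 ≤ n + 1), ih]
    simp only [Nat.succ_sub_one]
    push_cast
    rw [two_sin_cos]
    have h1 : (↑n+1)*t + t = (↑n+1+1)*t := by ring
    have h2 : (↑n+1)*t - t = (↑n:ℝ)*t := by ring
    rw [h1, h2]
    module

lemma abel_sin (z : ℕ → E) (hz0 : z 0 = 0) (n : ℕ) (t : ℝ) :
    ∑ k ∈ Finset.Icc 1 n, (2 * Real.sin t * Real.sin (k * t)) • z k
      = z 1 + ∑ k ∈ Finset.Icc 1 n, Real.cos (k * t) • (z (k+1) - z (k-1))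
        - Real.cos (n * t) • z (n+1) - Real.cos ((n+1 : ℕ) * t) • z n := by
  induction n with
  | zero => simp [hz0]
  | succ n ih =>
    rw [Finset.sum_Icc_succ_top (by omega : 1 ≤ n + 1),
        Finset.sum_Icc_succ_top (by omega : 1 ≤ n + 1)]
    have lhs : (∑ k ∈ Finset.Icc 1 n, (2 * Real.sin t * Real.sin (k * t)) • z k)
        = z 1 + ∑ k ∈ Finset.Icc 1 n, Real.cos (k * t) • (z (k+1) - z (k-1))
        - Real.cos (n * t) • z (n+1) - Real.cos ((n+1 : ℕ) * t) • z n := ih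
    rw [lhs]
    simp only [Nat.succ_sub_one]
    push_cast
    rw [two_sin_sin]
    have h1 : (↑n+1)*t + t = (↑n+1+1)*t := by ring
    have h2 : (↑n+1)*t - t = (↑n:ℝ)*t := by ring
    rw [h1, h2]
    module

lemma sin_middle {t : ℝ} (h1 : π/3 ≤ t) (h2 : t ≤ 2*π/3) : Real.sqrt 3 / 2 ≤ Real.sin t := by
  have hπ := Real.pi_pos
  have habs : |π/2 - t| ≤ π/6 := by
    rw [abs_le]; constructor <;> linarith
  have h0 : Real.cos (π/6) ≤ Real.cos |π/2 - t| := by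
    apply Real.cos_le_cos_of_nonneg_of_le_pi (abs_nonneg _) (by linarith) habs
  rw [Real.cos_abs, Real.cos_pi_div_two_sub] at h0
  rw [← Real.cos_pi_div_six]
  exact h0

lemma extend_nonneg {u : ℝ → ℝ} (hu : Continuous u) (hnn : ∀ t, 0 ≤ u t) :
    ∫ t in (π/3)..(2*π/3), u t ≤ ∫ t in (0:ℝ)..π, u t := by
  have hπ := Real.pi_pos
  have i1 : IntervalIntegrable u MeasureTheory.volume 0 (π/3) := hu.intervalIntegrable _ _
  have i2 : IntervalIntegrable u MeasureTheory.volume (π/3) (2*π/3) := hu.intervalIntegrable _ _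
  have i3 : IntervalIntegrable u MeasureTheory.volume (2*π/3) π := hu.intervalIntegrable _ _
  have e : ∫ t in (0:ℝ)..π, u t
      = ((∫ t in (0:ℝ)..(π/3), u t) + ∫ t in (π/3)..(2*π/3), u t) + ∫ t in (2*π/3)..π, u t := by
    rw [intervalIntegral.integral_add_adjacent_intervals i1 i2,
        intervalIntegral.integral_add_adjacent_intervals (i1.trans i2) i3]
  have n1 : 0 ≤ ∫ t in (0:ℝ)..(π/3), u t :=
    intervalIntegral.integral_nonneg (by linarith) (fun t _ => hnn t)
  have n3 : 0 ≤ ∫ t in (2*π/3)..π, u t :=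
    intervalIntegral.integral_nonneg (by linarith) (fun t _ => hnn t)
  linarith [e]

end S9c

namespace S9d
open S9 S9b S9c

variable {X : Type*} [NormedAddCommGroup X] [NormedSpace ℝ X]

lemma cont_sum_sin (z : ℕ → X) (n : ℕ) :
    Continuous fun t => ∑ k ∈ Finset.Icc 1 n, Real.sin (k * t) • z k := by
  apply continuous_finset_sum
  intro k _
  exact (Real.continuous_sin.comp (continuous_const.mul continuous_id)).smul continuous_const

lemma cont_sum_cos (z : ℕ → X) (n : ℕ) :
    Continuous fun t => ∑ k ∈ Finset.Icc 1 n, Real.cos (k * t) • z k := by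
  apply continuous_finset_sum
  intro k _
  exact (Real.continuous_cos.comp (continuous_const.mul continuous_id)).smul continuous_const

lemma coeff_bound (z : ℕ → X) {n m : ℕ} (hm1 : 1 ≤ m) (hmn : m ≤ n) :
    ‖z m‖ ≤ Real.sqrt (2/π) *
      Real.sqrt (∫ t in (0:ℝ)..π, ‖∑ k ∈ Finset.Icc 1 n, Real.sin (k * t) • z k‖^2) := by
  have hπ := Real.pi_pos
  obtain ⟨φ, hφ1, hφ2⟩ := exists_dual_vector'' ℝ (z m)
  set f : ℝ → X := fun t => ∑ k ∈ Finset.Icc 1 n, Real.sin (k * t) • z k with hf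
  have hfc : Continuous f := cont_sum_sin z n
  set S := Real.sqrt (∫ t in (0:ℝ)..π, ‖f t‖^2) with hS
  have hSnn : 0 ≤ S := Real.sqrt_nonneg _
  have hint : ∫ t in (0:ℝ)..π, Real.sin (m*t) * φ (f t) = (π/2) * ‖z m‖ := by
    have e1 : ∀ t, Real.sin (m*t) * φ (f t)
        = ∑ k ∈ Finset.Icc 1 n, (Real.sin (m*t) * Real.sin (k*t)) * φ (z k) := by
      intro t
      rw [hf]
      simp only [map_sum, _root_.map_smul, smul_eq_mul, Finset.mul_sum]
      exact Finset.sum_congr rfl (fun k _ => by ring)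
    rw [intervalIntegral.integral_congr (g := fun t => ∑ k ∈ Finset.Icc 1 n,
        (Real.sin (m*t) * Real.sin (k*t)) * φ (z k)) (fun t _ => e1 t)]
    rw [intervalIntegral.integral_finset_sum
      (f := fun (k : ℕ) (t : ℝ) => (Real.sin (m*t) * Real.sin (k*t)) * φ (z k))
      (fun k _ => (Continuous.intervalIntegrable (by fun_prop) _ _))]
    have term : ∀ k ∈ Finset.Icc 1 n,
        (∫ t in (0:ℝ)..π, (Real.sin (m*t) * Real.sin (k*t)) * φ (z k))
        = (if k = m then (π/2) * ‖z m‖ else 0) := by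
      intro k hk
      rw [intervalIntegral.integral_mul_const]
      by_cases hkm : k = m
      · subst hkm
        rw [if_pos rfl]
        have : ∀ t : ℝ, Real.sin (k*t) * Real.sin (k*t) = Real.sin (k*t)^2 := fun t => (sq _).symm
        rw [intervalIntegral.integral_congr (g := fun t => Real.sin (k*t)^2) (fun t _ => this t)]
        rw [int_sin_sq k (by omega), hφ2]
        norm_num
      · rw [if_neg hkm, int_sin_mul_sin (by omega : m ≠ 0) (Ne.symm hkm), zero_mul]
    rw [Finset.sum_congr rfl term, Finset.sum_ite_eq' (Finset.Icc 1 n) m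
      (fun _ => (π/2) * ‖z m‖), if_pos (Finset.mem_Icc.2 ⟨hm1, hmn⟩)]
  have hφle : ∀ t, |φ (f t)| ≤ ‖f t‖ := by
    intro t
    have h1 := φ.le_opNorm (f t)
    have h2 : ‖φ (f t)‖ = |φ (f t)| := Real.norm_eq_abs _
    nlinarith [norm_nonneg (f t)]
  have hle : (π/2) * ‖z m‖ ≤ Real.sqrt (π/2) * S := by
    rw [← hint]
    calc ∫ t in (0:ℝ)..π, Real.sin (m*t) * φ (f t)
        ≤ ∫ t in (0:ℝ)..π, |Real.sin (m*t)| * ‖f t‖ := by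
          have hc1 : Continuous fun t : ℝ => |Real.sin (↑m * t)| :=
            (Real.continuous_sin.comp (continuous_const.mul continuous_id)).abs
          have hc2 : Continuous fun t : ℝ => Real.sin (↑m * t) * φ (f t) :=
            (Real.continuous_sin.comp (continuous_const.mul continuous_id)).mul
              (φ.continuous.comp hfc)
          apply intervalIntegral.integral_mono_on (le_of_lt hπ)
            (hc2.intervalIntegrable _ _)
            ((hc1.mul hfc.norm).intervalIntegrable _ _)
          intro t _
          have h3 := hφle t
          have h4 : Real.sin (m*t) * φ (f t) ≤ |Real.sin (m*t)| * |φ (f t)| := by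
            calc Real.sin (m*t) * φ (f t) ≤ |Real.sin (m*t) * φ (f t)| := le_abs_self _
              _ = |Real.sin (m*t)| * |φ (f t)| := abs_mul _ _
          have h5 : |Real.sin (m*t)| * |φ (f t)| ≤ |Real.sin (m*t)| * ‖f t‖ :=
            mul_le_mul_of_nonneg_left h3 (abs_nonneg _)
          show Real.sin (m*t) * φ (f t) ≤ |Real.sin (m*t)| * ‖f t‖
          linarith
      _ ≤ Real.sqrt (∫ t in (0:ℝ)..π, |Real.sin (m*t)|^2) *
            Real.sqrt (∫ t in (0:ℝ)..π, ‖f t‖^2) := by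
          exact cs_aux (le_of_lt hπ)
            (Real.continuous_sin.comp (continuous_const.mul continuous_id)).abs hfc.norm
      _ = Real.sqrt (π/2) * S := by
          rw [hS]
          congr 1
          rw [intervalIntegral.integral_congr
            (g := fun t => Real.sin (m*t)^2) (fun t _ => sq_abs _)]
          rw [int_sin_sq m (by omega)]
  set s := Real.sqrt (2/π) with hs'
  have hs2 : s^2 = 2/π := Real.sq_sqrt (by positivity)
  have hq : s * Real.sqrt (π/2) = 1 := by
    rw [hs', ← Real.sqrt_mul (by positivity)]
    rw [show (2/π) * (π/2) = 1 by field_simp]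
    exact Real.sqrt_one
  have e : ‖z m‖ = (2/π) * ((π/2) * ‖z m‖) := by field_simp
  rw [e]
  calc (2/π) * ((π/2) * ‖z m‖) ≤ (2/π) * (Real.sqrt (π/2) * S) :=
        mul_le_mul_of_nonneg_left hle (by positivity)
    _ = s * S := by rw [← hs2]; linear_combination S * s * hq

end S9d

namespace S9e
open S9 S9b S9c S9d

variable {E : Type*} [NormedAddCommGroup E] [NormedSpace ℝ E]

lemma int_sq_smul_sin (m : ℕ) (hm : m ≠ 0) (w : E) :
    ∫ t in (0:ℝ)..π, ‖Real.sin (m*t) • w‖^2 = (π/2) * ‖w‖^2 := by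
  have e : ∀ t : ℝ, ‖Real.sin (m*t) • w‖^2 = Real.sin (m*t)^2 * ‖w‖^2 := by
    intro t; rw [norm_smul, Real.norm_eq_abs, mul_pow, sq_abs]
  rw [intervalIntegral.integral_congr (g := fun t => Real.sin (m*t)^2 * ‖w‖^2)
    (fun t _ => e t), intervalIntegral.integral_mul_const, int_sin_sq m hm]

lemma int_sq_smul_cos (m : ℕ) (hm : m ≠ 0) (w : E) :
    ∫ t in (0:ℝ)..π, ‖Real.cos (m*t) • w‖^2 = (π/2) * ‖w‖^2 := by
  have e : ∀ t : ℝ, ‖Real.cos (m*t) • w‖^2 = Real.cos (m*t)^2 * ‖w‖^2 := by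
    intro t; rw [norm_smul, Real.norm_eq_abs, mul_pow, sq_abs]
  rw [intervalIntegral.integral_congr (g := fun t => Real.cos (m*t)^2 * ‖w‖^2)
    (fun t _ => e t), intervalIntegral.integral_mul_const, int_cos_sq m hm]

lemma sqrt_half_pi_sq (w : E) :
    Real.sqrt ((π/2) * ‖w‖^2) = Real.sqrt (π/2) * ‖w‖ := by
  rw [Real.sqrt_mul (by positivity), Real.sqrt_sq (norm_nonneg w)]

lemma sqrt_L2_sin (m : ℕ) (hm : m ≠ 0) (w : E) :
    Real.sqrt ((2/π) * ∫ t in (0:ℝ)..π, ‖Real.sin (m*t) • w‖^2) = ‖w‖ := by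
  have hπ := Real.pi_pos
  rw [int_sq_smul_sin m hm w, show (2/π) * ((π/2) * ‖w‖^2) = ‖w‖^2 by field_simp]
  exact Real.sqrt_sq (norm_nonneg w)

lemma sqrt_L2_cos (m : ℕ) (hm : m ≠ 0) (w : E) :
    Real.sqrt ((2/π) * ∫ t in (0:ℝ)..π, ‖Real.cos (m*t) • w‖^2) = ‖w‖ := by
  have hπ := Real.pi_pos
  rw [int_sq_smul_cos m hm w, show (2/π) * ((π/2) * ‖w‖^2) = ‖w‖^2 by field_simp]
  exact Real.sqrt_sq (norm_nonneg w)

lemma nu_mul (I : ℝ) :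
    Real.sqrt ((2/π) * I) = Real.sqrt (2/π) * Real.sqrt I :=
  Real.sqrt_mul (by positivity) I

end S9e
open S9 S9b S9c S9d S9e in
set_option maxHeartbeats 1000000 in
/-- Lemma 6: if `c` dominates `ϱ(T|𝒮_n,𝒞_n)`, then the `L₂`-norm of `Σ Tx_k cos kt`
over the middle third `[π/3, 2π/3]` is at most `4 c ‖(x_k)|𝒮_n‖`. -/
theorem stmt9 {X Y : Type*} [NormedAddCommGroup X] [NormedSpace ℝ X]
    [NormedAddCommGroup Y] [NormedSpace ℝ Y]
    (T : X →L[ℝ] Y) {n : ℕ} (c : ℝ) (hc : 0 ≤ c)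
    (h : ∀ y : ℕ → X,
      Real.sqrt ((2 / π) * ∫ t in (0 : ℝ)..π,
          ‖∑ k ∈ Finset.Icc 1 n, Real.sin (k * t) • T (y k)‖ ^ 2) ≤
        c * Real.sqrt ((2 / π) * ∫ t in (0 : ℝ)..π,
          ‖∑ k ∈ Finset.Icc 1 n, Real.cos (k * t) • y k‖ ^ 2))
    (x : ℕ → X) :
    Real.sqrt ((2 / π) * ∫ t in (π / 3)..(2 * π / 3),
        ‖∑ k ∈ Finset.Icc 1 n, Real.cos (k * t) • T (x k)‖ ^ 2) ≤
      4 * c * Real.sqrt ((2 / π) * ∫ t in (0 : ℝ)..π,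
        ‖∑ k ∈ Finset.Icc 1 n, Real.sin (k * t) • x k‖ ^ 2) := by
  have hπ := Real.pi_pos
  rcases Nat.eq_zero_or_pos n with hn | hn1
  · subst hn
    simp
  -- setup
  set z : ℕ → X := fun k => if k ∈ Finset.Icc 1 n then x k else 0 with hzdef
  have hz0 : z 0 = 0 := by simp [hzdef]
  have hzn1 : z (n+1) = 0 := by simp [hzdef, Finset.mem_Icc]
  have hxz : ∀ k ∈ Finset.Icc 1 n, z k = x k := fun k hk => by simp only [hzdef]; exact if_pos hk
  set f : ℝ → X := fun t => ∑ k ∈ Finset.Icc 1 n, Real.sin (k * t) • z k with hfdef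
  set g : ℝ → Y := fun t => ∑ k ∈ Finset.Icc 1 n, Real.cos (k * t) • T (z k) with hgdef
  have hfc : Continuous f := cont_sum_sin z n
  have hgc : Continuous g := cont_sum_cos (fun k => T (z k)) n
  set S0 : ℝ := Real.sqrt (∫ t in (0:ℝ)..π, ‖f t‖^2) with hS0def
  have hS0nn : 0 ≤ S0 := Real.sqrt_nonneg _
  set ν : ℝ := Real.sqrt (2/π) with hνdef
  have hνpos : 0 < ν := Real.sqrt_pos.2 (by positivity)
  have hν1 : ν * Real.sqrt (π/2) = 1 := by
    rw [hνdef, ← Real.sqrt_mul (by positivity), show (2/π) * (π/2) = 1 by field_simp]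
    exact Real.sqrt_one
  have hν2 : Real.sqrt π * ν = Real.sqrt 2 := by
    rw [hνdef, ← Real.sqrt_mul Real.pi_pos.le, show π * (2/π) = 2 by field_simp]
  -- rewrite goal in terms of z
  have hgoal1 : (∫ t in (π/3)..(2*π/3), ‖∑ k ∈ Finset.Icc 1 n, Real.cos (k * t) • T (x k)‖ ^ 2)
      = ∫ t in (π/3)..(2*π/3), ‖g t‖^2 := by
    apply intervalIntegral.integral_congr
    intro t _
    show ‖∑ k ∈ Finset.Icc 1 n, Real.cos (k * t) • T (x k)‖^2
        = ‖∑ k ∈ Finset.Icc 1 n, Real.cos (k * t) • T (z k)‖^2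
    have e : (∑ k ∈ Finset.Icc 1 n, Real.cos (k * t) • T (x k))
        = ∑ k ∈ Finset.Icc 1 n, Real.cos (k * t) • T (z k) :=
      (Finset.sum_congr rfl (fun k hk => by rw [hxz k hk]))
    rw [e]
  have hgoal2 : (∫ t in (0:ℝ)..π, ‖∑ k ∈ Finset.Icc 1 n, Real.sin (k * t) • x k‖ ^ 2)
      = ∫ t in (0:ℝ)..π, ‖f t‖^2 := by
    apply intervalIntegral.integral_congr
    intro t _
    show ‖∑ k ∈ Finset.Icc 1 n, Real.sin (k * t) • x k‖^2
        = ‖∑ k ∈ Finset.Icc 1 n, Real.sin (k * t) • z k‖^2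
    have e : (∑ k ∈ Finset.Icc 1 n, Real.sin (k * t) • x k)
        = ∑ k ∈ Finset.Icc 1 n, Real.sin (k * t) • z k :=
      (Finset.sum_congr rfl (fun k hk => by rw [hxz k hk]))
    rw [e]
  rw [hgoal1, hgoal2, nu_mul, nu_mul, ← hνdef, ← hS0def]
  -- operator norm bound from h
  have opn : ∀ v : X, ‖T v‖ ≤ c * ‖v‖ := by
    intro v
    have hy := h (fun k => if k = 1 then v else 0)
    have e1 : ∀ t : ℝ, (∑ k ∈ Finset.Icc 1 n,
        Real.sin (k * t) • T (if k = 1 then v else 0)) = Real.sin ((1:ℕ) * t) • T v := by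
      intro t
      have step : ∀ k ∈ Finset.Icc 1 n, Real.sin (k * t) • T (if k = 1 then v else 0)
          = if k = 1 then Real.sin (k * t) • T v else 0 := by
        intro k _; split_ifs <;> simp
      refine (Finset.sum_congr rfl step).trans ?_
      rw [Finset.sum_ite_eq' (Finset.Icc 1 n) 1 (fun k => Real.sin (k * t) • T v),
        if_pos (Finset.mem_Icc.2 ⟨le_refl 1, hn1⟩)]
    have e2 : ∀ t : ℝ, (∑ k ∈ Finset.Icc 1 n,
        Real.cos (k * t) • (if k = 1 then v else 0)) = Real.cos ((1:ℕ) * t) • v := by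
      intro t
      have step : ∀ k ∈ Finset.Icc 1 n, Real.cos (k * t) • (if k = 1 then v else 0)
          = if k = 1 then Real.cos (k * t) • v else 0 := by
        intro k _; split_ifs <;> simp
      refine (Finset.sum_congr rfl step).trans ?_
      rw [Finset.sum_ite_eq' (Finset.Icc 1 n) 1 (fun k => Real.cos (k * t) • v),
        if_pos (Finset.mem_Icc.2 ⟨le_refl 1, hn1⟩)]
    rw [show (∫ t in (0:ℝ)..π, ‖∑ k ∈ Finset.Icc 1 n,
          Real.sin (k * t) • T (if k = 1 then v else 0)‖ ^ 2)
        = ∫ t in (0:ℝ)..π, ‖Real.sin ((1:ℕ) * t) • T v‖^2 from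
        intervalIntegral.integral_congr (fun t _ => by rw [e1 t]),
      show (∫ t in (0:ℝ)..π, ‖∑ k ∈ Finset.Icc 1 n,
          Real.cos (k * t) • (if k = 1 then v else 0)‖ ^ 2)
        = ∫ t in (0:ℝ)..π, ‖Real.cos ((1:ℕ) * t) • v‖^2 from
        intervalIntegral.integral_congr (fun t _ => by rw [e2 t]),
      sqrt_L2_sin 1 one_ne_zero, sqrt_L2_cos 1 one_ne_zero] at hy
    exact hy
  -- coefficient bounds
  have b1 : ‖z 1‖ ≤ ν * S0 := coeff_bound z (le_refl 1) hn1
  have bn : ‖z n‖ ≤ ν * S0 := coeff_bound z hn1 (le_refl n)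
  set A : ℝ := Real.sqrt (∫ t in (π/3)..(2*π/3), ‖g t‖^2) with hAdef
  set B : ℝ := Real.sqrt (∫ t in (0:ℝ)..π, ‖(2 * Real.sin t) • g t‖^2) with hBdef
  have hBnn : 0 ≤ B := Real.sqrt_nonneg _
  have stepA : A ≤ Real.sqrt (1/3) * B := by
    have h1 : (∫ t in (π/3)..(2*π/3), ‖g t‖^2)
        ≤ (1/3) * ∫ t in (0:ℝ)..π, ‖(2 * Real.sin t) • g t‖^2 := by
      have hmono : (∫ t in (π/3)..(2*π/3), ‖g t‖^2)
          ≤ ∫ t in (π/3)..(2*π/3), (1/3) * ‖(2 * Real.sin t) • g t‖^2 := by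
        apply intervalIntegral.integral_mono_on (by linarith)
          ((hgc.norm.pow 2).intervalIntegrable _ _)
          ((Continuous.intervalIntegrable (by fun_prop) _ _))
        intro t ht
        obtain ⟨ht1, ht2⟩ := ht
        have hs := sin_middle ht1 ht2
        have h3 : Real.sqrt 3 ^ 2 = 3 := Real.sq_sqrt (by norm_num)
        have hnorm : ‖(2 * Real.sin t) • g t‖^2 = (2 * Real.sin t)^2 * ‖g t‖^2 := by
          rw [norm_smul, Real.norm_eq_abs, mul_pow, sq_abs]
        show ‖g t‖^2 ≤ (1/3) * ‖(2 * Real.sin t) • g t‖^2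
        rw [hnorm]
        have hsin2 : 3/4 ≤ Real.sin t ^ 2 := by
          nlinarith [hs, h3, Real.sqrt_nonneg 3]
        nlinarith [hsin2, sq_nonneg (‖g t‖)]
      have hext : (∫ t in (π/3)..(2*π/3), (1/3) * ‖(2 * Real.sin t) • g t‖^2)
          ≤ ∫ t in (0:ℝ)..π, (1/3) * ‖(2 * Real.sin t) • g t‖^2 := by
        apply extend_nonneg (by fun_prop)
        intro t; positivity
      have e : (∫ t in (0:ℝ)..π, (1/3) * ‖(2 * Real.sin t) • g t‖^2)
          = (1/3) * ∫ t in (0:ℝ)..π, ‖(2 * Real.sin t) • g t‖^2 :=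
        intervalIntegral.integral_const_mul _ _
      linarith
    calc A ≤ Real.sqrt ((1/3) * ∫ t in (0:ℝ)..π, ‖(2 * Real.sin t) • g t‖^2) :=
          Real.sqrt_le_sqrt h1
      _ = Real.sqrt (1/3) * B := Real.sqrt_mul (by norm_num) _
  -- summation by parts for g
  set w : ℕ → X := fun k => z (k-1) - z (k+1) with hwdef
  have habel : ∀ t : ℝ, (2 * Real.sin t) • g t
      = (∑ k ∈ Finset.Icc 1 n, Real.sin (k * t) • T (w k))
        + Real.sin ((n+1:ℕ) * t) • T (z n) := by
    intro t
    have h1 := abel_cos (fun k => T (z k)) (by simp [hz0]) n t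
    beta_reduce at h1
    have h2 : (2 * Real.sin t) • g t
        = ∑ k ∈ Finset.Icc 1 n, (2 * Real.sin t * Real.cos (k * t)) • T (z k) := by
      rw [hgdef]
      simp only [Finset.smul_sum, smul_smul]
    rw [h2, h1, hzn1]
    simp only [map_zero, smul_zero, add_zero]
    congr 1
    apply Finset.sum_congr rfl
    intro k _
    rw [hwdef]
    simp [map_sub]
  -- Minkowski split of B
  set P : ℝ := Real.sqrt (∫ t in (0:ℝ)..π,
      ‖∑ k ∈ Finset.Icc 1 n, Real.sin (k * t) • T (w k)‖^2) with hPdef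
  have hBsplit : B ≤ P + Real.sqrt (π/2) * ‖T (z n)‖ := by
    have hcont1 : Continuous fun t => ∑ k ∈ Finset.Icc 1 n, Real.sin (k * t) • T (w k) :=
      cont_sum_sin (fun k => T (w k)) n
    have hcont2 : Continuous fun t : ℝ => Real.sin ((n+1:ℕ) * t) • T (z n) := by fun_prop
    have e : (∫ t in (0:ℝ)..π, ‖(2 * Real.sin t) • g t‖^2)
        = ∫ t in (0:ℝ)..π, ‖(∑ k ∈ Finset.Icc 1 n, Real.sin (k * t) • T (w k))
            + Real.sin ((n+1:ℕ) * t) • T (z n)‖^2 :=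
      intervalIntegral.integral_congr (fun t _ => by rw [habel t])
    rw [hBdef, e]
    have hmk := minkowski (le_of_lt hπ) hcont1 hcont2
    refine hmk.trans ?_
    rw [int_sq_smul_sin (n+1) (by omega) (T (z n)), sqrt_half_pi_sq]
  -- bound boundary term
  have hbd : Real.sqrt (π/2) * ‖T (z n)‖ ≤ c * S0 := by
    have h1 : ‖T (z n)‖ ≤ c * ‖z n‖ := opn (z n)
    have h2 : c * ‖z n‖ ≤ c * (ν * S0) := mul_le_mul_of_nonneg_left bn hc
    calc Real.sqrt (π/2) * ‖T (z n)‖ ≤ Real.sqrt (π/2) * (c * (ν * S0)) :=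
          mul_le_mul_of_nonneg_left (h1.trans h2) (Real.sqrt_nonneg _)
      _ = c * S0 * (ν * Real.sqrt (π/2)) := by ring
      _ = c * S0 := by rw [hν1, mul_one]
  -- apply h to w
  have hP : P ≤ c * Real.sqrt (∫ t in (0:ℝ)..π,
      ‖∑ k ∈ Finset.Icc 1 n, Real.cos (k * t) • w k‖^2) := by
    have hy := h w
    rw [nu_mul, nu_mul, ← hνdef] at hy
    exact le_of_mul_le_mul_left (hy.trans_eq (by ring)) hνpos
  -- identity for cos sum of w
  have hw_id : ∀ t : ℝ, (∑ k ∈ Finset.Icc 1 n, Real.cos (k * t) • w k)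
      = (z 1 + (-(Real.cos ((n+1:ℕ) * t) • z n))) + (-((2 * Real.sin t) • f t)) := by
    intro t
    have h1 := abel_sin z hz0 n t
    have h2 : (2 * Real.sin t) • f t
        = ∑ k ∈ Finset.Icc 1 n, (2 * Real.sin t * Real.sin (k * t)) • z k := by
      rw [hfdef]
      simp only [Finset.smul_sum, smul_smul]
    rw [← h2, hzn1, smul_zero, sub_zero] at h1
    have e : (∑ k ∈ Finset.Icc 1 n, Real.cos (k * t) • w k)
        = - ∑ k ∈ Finset.Icc 1 n, Real.cos (k * t) • (z (k+1) - z (k-1)) := by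
      rw [← Finset.sum_neg_distrib]
      apply Finset.sum_congr rfl
      intro k _
      rw [hwdef, ← smul_neg, neg_sub]
    have hSc : (∑ k ∈ Finset.Icc 1 n, Real.cos (k * t) • (z (k+1) - z (k-1)))
        = (2 * Real.sin t) • f t - z 1 + Real.cos ((n+1:ℕ) * t) • z n := by
      rw [h1]; abel
    rw [e, hSc]
    abel
  -- bound cos sum of w
  have hR : Real.sqrt (∫ t in (0:ℝ)..π, ‖∑ k ∈ Finset.Icc 1 n, Real.cos (k * t) • w k‖^2)
      ≤ (Real.sqrt 2 + 3) * S0 := by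
    have hc1 : Continuous fun _ : ℝ => z 1 := continuous_const
    have hc2 : Continuous fun t : ℝ => -(Real.cos ((n+1:ℕ) * t) • z n) := by fun_prop
    have hc3 : Continuous fun t : ℝ => -((2 * Real.sin t) • f t) := by fun_prop
    have e : (∫ t in (0:ℝ)..π, ‖∑ k ∈ Finset.Icc 1 n, Real.cos (k * t) • w k‖^2)
        = ∫ t in (0:ℝ)..π, ‖(z 1 + (-(Real.cos ((n+1:ℕ) * t) • z n)))
            + (-((2 * Real.sin t) • f t))‖^2 :=
      intervalIntegral.integral_congr (fun t _ => by rw [hw_id t])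
    rw [e]
    have m1 := minkowski (le_of_lt hπ) (hc1.add hc2) hc3
    have m2 := minkowski (le_of_lt hπ) hc1 hc2
    have t1 : Real.sqrt (∫ _ in (0:ℝ)..π, ‖z 1‖^2) = Real.sqrt π * ‖z 1‖ := by
      rw [intervalIntegral.integral_const, smul_eq_mul, sub_zero,
        Real.sqrt_mul (le_of_lt hπ), Real.sqrt_sq (norm_nonneg _)]
    have t2 : Real.sqrt (∫ t in (0:ℝ)..π, ‖-(Real.cos ((n+1:ℕ) * t) • z n)‖^2)
        = Real.sqrt (π/2) * ‖z n‖ := by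
      rw [intervalIntegral.integral_congr (g := fun t => ‖Real.cos ((n+1:ℕ) * t) • z n‖^2)
        (fun t _ => by rw [norm_neg]), int_sq_smul_cos (n+1) (by omega), sqrt_half_pi_sq]
    have t3 : Real.sqrt (∫ t in (0:ℝ)..π, ‖-((2 * Real.sin t) • f t)‖^2) ≤ 2 * S0 := by
      have hint : (∫ t in (0:ℝ)..π, ‖-((2 * Real.sin t) • f t)‖^2)
          ≤ ∫ t in (0:ℝ)..π, 4 * ‖f t‖^2 := by
        apply intervalIntegral.integral_mono_on (le_of_lt hπ)
          ((hc3.norm.pow 2).intervalIntegrable _ _)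
          (Continuous.intervalIntegrable (by fun_prop) _ _)
        intro t _
        show ‖-((2 * Real.sin t) • f t)‖^2 ≤ 4 * ‖f t‖^2
        rw [norm_neg, norm_smul, Real.norm_eq_abs, mul_pow, sq_abs]
        nlinarith [Real.sin_sq_le_one t, sq_nonneg (‖f t‖)]
      calc Real.sqrt (∫ t in (0:ℝ)..π, ‖-((2 * Real.sin t) • f t)‖^2)
          ≤ Real.sqrt (∫ t in (0:ℝ)..π, 4 * ‖f t‖^2) := Real.sqrt_le_sqrt hint
        _ = 2 * S0 := by
            rw [intervalIntegral.integral_const_mul, Real.sqrt_mul (by norm_num), hS0def,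
              show Real.sqrt 4 = 2 by
                rw [show (4:ℝ) = 2^2 by norm_num, Real.sqrt_sq (by norm_num)]]
    have hz1b : Real.sqrt π * ‖z 1‖ ≤ Real.sqrt 2 * S0 := by
      calc Real.sqrt π * ‖z 1‖ ≤ Real.sqrt π * (ν * S0) :=
            mul_le_mul_of_nonneg_left b1 (Real.sqrt_nonneg _)
        _ = (Real.sqrt π * ν) * S0 := by ring
        _ = Real.sqrt 2 * S0 := by rw [hν2]
    have hznb : Real.sqrt (π/2) * ‖z n‖ ≤ 1 * S0 := by
      calc Real.sqrt (π/2) * ‖z n‖ ≤ Real.sqrt (π/2) * (ν * S0) :=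
            mul_le_mul_of_nonneg_left bn (Real.sqrt_nonneg _)
        _ = (ν * Real.sqrt (π/2)) * S0 := by ring
        _ = 1 * S0 := by rw [hν1]
    rw [t1, t2] at m2
    refine m1.trans ?_
    have := add_le_add m2 t3
    refine this.trans ?_
    linarith
  -- final assembly
  have hBtot : B ≤ c * ((Real.sqrt 2 + 3) * S0) + c * S0 := by
    have h1 : P ≤ c * ((Real.sqrt 2 + 3) * S0) := hP.trans (mul_le_mul_of_nonneg_left hR hc)
    linarith [hBsplit, hbd]
  have hnum : Real.sqrt (1/3) * (Real.sqrt 2 + 4) ≤ 4 := by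
    have e1 : Real.sqrt 2 ≤ 1.5 := by
      rw [show (1.5:ℝ) = Real.sqrt (1.5^2) from (Real.sqrt_sq (by norm_num)).symm]
      exact Real.sqrt_le_sqrt (by norm_num)
    have e2 : Real.sqrt (1/3) ≤ 0.6 := by
      rw [show (0.6:ℝ) = Real.sqrt (0.6^2) from (Real.sqrt_sq (by norm_num)).symm]
      exact Real.sqrt_le_sqrt (by norm_num)
    nlinarith [Real.sqrt_nonneg (1/3), Real.sqrt_nonneg 2]
  have hfinal : A ≤ 4 * c * S0 := by
    calc A ≤ Real.sqrt (1/3) * B := stepA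
      _ ≤ Real.sqrt (1/3) * (c * ((Real.sqrt 2 + 3) * S0) + c * S0) :=
          mul_le_mul_of_nonneg_left hBtot (Real.sqrt_nonneg _)
      _ = (Real.sqrt (1/3) * (Real.sqrt 2 + 4)) * (c * S0) := by ring
      _ ≤ 4 * (c * S0) := mul_le_mul_of_nonneg_right hnum (by positivity)
      _ = 4 * c * S0 := by ring
  calc ν * A ≤ ν * (4 * c * S0) := mul_le_mul_of_nonneg_left hfinal hνpos.le
    _ = 4 * c * (ν * S0) := by ring
end

section
/- Let X, Y be Banach spaces and T : X → Y a bounded linear operator. If c ≥ 0 satisfies ‖(T y_k)|S_n‖ ≤ c ‖(y_k)|C_n‖ for all y_1,...,y_n ∈ X, then ‖(T x_k)|C_n‖ ≤ 9c ‖(x_k)|S_n‖ for all x_1,...,x_n ∈ X. In ideal-norm notation: ϱ(C_n, S_n) ≤ 9 ϱ(S_n, C_n) uniformly in n. -/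
set_option maxHeartbeats 1000000


open Real

section Stmt10Aux

variable {E : Type*} [NormedAddCommGroup E] [NormedSpace ℝ E]

private lemma stmt10_doubling (w : ℝ → E) (hw : Continuous w)
    (hper : ∀ t, w (t + 2 * π) = w t) (hsym : ∀ t, ‖w (-t)‖ = ‖w t‖) :
    ∫ t in (0:ℝ)..2 * π, ‖w t‖ ^ 2 = 2 * ∫ t in (0:ℝ)..π, ‖w t‖ ^ 2 := by
  have hφc : Continuous fun t => ‖w t‖ ^ 2 := hw.norm.pow 2
  have hφper : Function.Periodic (fun t => ‖w t‖ ^ 2) (2 * π) := fun t => by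
    simp only [hper t]
  have h1 : ∫ t in (0:ℝ)..2 * π, ‖w t‖ ^ 2 = ∫ t in (-π)..π, ‖w t‖ ^ 2 := by
    have h := hφper.intervalIntegral_add_eq 0 (-π)
    have e1 : (0:ℝ) + 2 * π = 2 * π := by ring
    have e2 : (-π) + 2 * π = π := by ring
    rw [e1, e2] at h
    exact h
  have h2 : ∫ t in (-π:ℝ)..0, ‖w t‖ ^ 2 = ∫ t in (0:ℝ)..π, ‖w t‖ ^ 2 := by
    have h := intervalIntegral.integral_comp_neg (a := (0:ℝ)) (b := π)
      (f := fun t => ‖w t‖ ^ 2)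
    rw [neg_zero] at h
    rw [← h]
    apply intervalIntegral.integral_congr
    intro t _
    simp only [hsym t]
  have i1 : IntervalIntegrable (fun t => ‖w t‖ ^ 2) MeasureTheory.volume (-π) 0 :=
    hφc.intervalIntegrable _ _
  have i2 : IntervalIntegrable (fun t => ‖w t‖ ^ 2) MeasureTheory.volume 0 π :=
    hφc.intervalIntegrable _ _
  have h3 := intervalIntegral.integral_add_adjacent_intervals i1 i2
  linarith [h1, h2, h3]

private lemma stmt10_transl (w : ℝ → E)
    (hper : ∀ t, w (t + 2 * π) = w t) (a : ℝ) :
    ∫ t in (0:ℝ)..2 * π, ‖w (t + a)‖ ^ 2 = ∫ t in (0:ℝ)..2 * π, ‖w t‖ ^ 2 := by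
  have hφper : Function.Periodic (fun t => ‖w t‖ ^ 2) (2 * π) := fun t => by
    simp only [hper t]
  have h := intervalIntegral.integral_comp_add_right (a := (0:ℝ)) (b := 2 * π)
    (f := fun t => ‖w t‖ ^ 2) a
  rw [h]
  have h2 := hφper.intervalIntegral_add_eq a 0
  have e1 : (0:ℝ) + a = a := by ring
  have e2 : 2 * π + a = a + 2 * π := by ring
  have e3 : (0:ℝ) + 2 * π = 2 * π := by ring
  rw [e1, e2]
  rw [e3] at h2
  exact h2

private lemma stmt10_cos_diff (A : Finset ℕ) (v : ℕ → E) (θ t : ℝ) :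
    ((∑ k ∈ A, Real.cos ((k:ℝ) * (t + θ)) • v k)
      - ∑ k ∈ A, Real.cos ((k:ℝ) * (t - θ)) • v k)
    = (-2 : ℝ) • ∑ k ∈ A, (Real.sin ((k:ℝ) * θ) * Real.sin ((k:ℝ) * t)) • v k := by
  rw [Finset.smul_sum, ← Finset.sum_sub_distrib]
  refine Finset.sum_congr rfl fun k _ => ?_
  rw [← sub_smul, smul_smul]
  congr 1
  have e1 : (k:ℝ) * (t + θ) = (k:ℝ) * t + (k:ℝ) * θ := by ring
  have e2 : (k:ℝ) * (t - θ) = (k:ℝ) * t - (k:ℝ) * θ := by ring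
  rw [e1, e2, Real.cos_add, Real.cos_sub]
  ring

private lemma stmt10_sin_diff (A : Finset ℕ) (v : ℕ → E) (θ t : ℝ) :
    ((∑ k ∈ A, Real.sin ((k:ℝ) * (t + θ)) • v k)
      - ∑ k ∈ A, Real.sin ((k:ℝ) * (t - θ)) • v k)
    = (2 : ℝ) • ∑ k ∈ A, (Real.sin ((k:ℝ) * θ) * Real.cos ((k:ℝ) * t)) • v k := by
  rw [Finset.smul_sum, ← Finset.sum_sub_distrib]
  refine Finset.sum_congr rfl fun k _ => ?_
  rw [← sub_smul, smul_smul]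
  congr 1
  have e1 : (k:ℝ) * (t + θ) = (k:ℝ) * t + (k:ℝ) * θ := by ring
  have e2 : (k:ℝ) * (t - θ) = (k:ℝ) * t - (k:ℝ) * θ := by ring
  rw [e1, e2, Real.sin_add, Real.sin_sub]
  ring

private lemma stmt10_cos_per (k : ℕ) (t : ℝ) :
    Real.cos ((k:ℝ) * (t + 2 * π)) = Real.cos ((k:ℝ) * t) := by
  have e : (k:ℝ) * (t + 2 * π) = (k:ℝ) * t + (k:ℕ) * (2 * π) := by push_cast; ring
  rw [e]
  exact (Real.cos_periodic.nat_mul k) _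

private lemma stmt10_sin_per (k : ℕ) (t : ℝ) :
    Real.sin ((k:ℝ) * (t + 2 * π)) = Real.sin ((k:ℝ) * t) := by
  have e : (k:ℝ) * (t + 2 * π) = (k:ℝ) * t + (k:ℕ) * (2 * π) := by push_cast; ring
  rw [e]
  exact (Real.sin_periodic.nat_mul k) _

private lemma stmt10_cos_sum_vanish {M k : ℕ} (hk1 : 1 ≤ k) (hkM : k < M) (t : ℝ) :
    ∑ j ∈ Finset.range M, Real.cos ((k:ℝ) * (t - (j:ℝ) * (2 * π / (M:ℝ)))) = 0 := by
  have hM0 : 0 < M := lt_of_le_of_lt (Nat.zero_le k) hkM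
  have hMR : (0:ℝ) < (M:ℝ) := by exact_mod_cast hM0
  have hkR : (0:ℝ) < (k:ℝ) := by exact_mod_cast hk1
  have hkMR : (k:ℝ) < (M:ℝ) := by exact_mod_cast hkM
  set τ : ℝ := 2 * π / (M:ℝ) with hτ
  have hτpos : 0 < τ := by
    rw [hτ]; positivity
  set z : ℂ := Complex.exp ((-((k:ℝ) * τ) : ℝ) * Complex.I) with hz
  have hMC : ((M:ℕ) : ℂ) ≠ 0 := by exact_mod_cast hMR.ne'
  have hzM : z ^ M = 1 := by
    rw [hz, ← Complex.exp_nat_mul]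
    have e : (M:ℂ) * ((-((k:ℝ) * τ) : ℝ) * Complex.I)
        = ((-(k:ℤ) : ℤ) : ℂ) * (2 * (π:ℂ) * Complex.I) := by
      rw [hτ]
      push_cast
      field_simp
    rw [e]
    exact Complex.exp_int_mul_two_pi_mul_I _
  have hz1 : z ≠ 1 := by
    rw [hz]
    intro hcon
    rw [Complex.exp_eq_one_iff] at hcon
    obtain ⟨m, hm⟩ := hcon
    have him : -((k:ℝ) * τ) = (m:ℝ) * (2 * π) := by
      have := congrArg Complex.im hm
      simpa using this
    have hfrac : (k:ℝ) / (M:ℝ) < 1 := (div_lt_one hMR).mpr hkMR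
    have hπ : (0:ℝ) < π := Real.pi_pos
    have hlt : (k:ℝ) * τ < 2 * π := by
      rw [hτ]
      have e : (k:ℝ) * (2 * π / (M:ℝ)) = 2 * π * ((k:ℝ) / (M:ℝ)) := by ring
      rw [e]
      nlinarith [hfrac, hπ]
    have hgt : 0 < (k:ℝ) * τ := mul_pos hkR hτpos
    have hm1 : (-1:ℝ) < (m:ℝ) := by nlinarith
    have hm2 : (m:ℝ) < 0 := by nlinarith
    have : (-1:ℤ) < m := by exact_mod_cast hm1
    have : m < 0 := by exact_mod_cast hm2
    omega
  have hgeom : ∑ j ∈ Finset.range M, z ^ j = 0 := by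
    rw [geom_sum_eq hz1, hzM]
    simp
  have hterm : ∀ j : ℕ, Complex.exp ((((k:ℝ) * (t - (j:ℝ) * τ)) : ℝ) * Complex.I)
      = Complex.exp ((((k:ℝ) * t) : ℝ) * Complex.I) * z ^ j := by
    intro j
    rw [hz, ← Complex.exp_nat_mul, ← Complex.exp_add]
    congr 1
    push_cast
    ring
  calc ∑ j ∈ Finset.range M, Real.cos ((k:ℝ) * (t - (j:ℝ) * τ))
      = ∑ j ∈ Finset.range M,
          (Complex.exp ((((k:ℝ) * (t - (j:ℝ) * τ)) : ℝ) * Complex.I)).re := by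
        exact Finset.sum_congr rfl fun j _ => (Complex.exp_ofReal_mul_I_re _).symm
    _ = (∑ j ∈ Finset.range M,
          Complex.exp ((((k:ℝ) * (t - (j:ℝ) * τ)) : ℝ) * Complex.I)).re := by
        rw [Complex.re_sum]
    _ = (Complex.exp ((((k:ℝ) * t) : ℝ) * Complex.I) * ∑ j ∈ Finset.range M, z ^ j).re := by
        rw [Finset.mul_sum]
        congr 1
        exact Finset.sum_congr rfl fun j _ => hterm j
    _ = 0 := by rw [hgeom, mul_zero, Complex.zero_re]

end Stmt10Aux

/-- Proposition: `ϱ(𝒞_n,𝒮_n) ≤ 9 ϱ(𝒮_n,𝒞_n)`, in the form: any admissible constant `c`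
for `ϱ(T|𝒮_n,𝒞_n)` makes `9c` admissible for `ϱ(T|𝒞_n,𝒮_n)`. -/
theorem stmt10 {X Y : Type*} [NormedAddCommGroup X] [NormedSpace ℝ X]
    [NormedAddCommGroup Y] [NormedSpace ℝ Y]
    (T : X →L[ℝ] Y) {n : ℕ} (c : ℝ) (hc : 0 ≤ c)
    (h : ∀ y : ℕ → X,
      Real.sqrt ((2 / π) * ∫ t in (0 : ℝ)..π,
          ‖∑ k ∈ Finset.Icc 1 n, Real.sin (k * t) • T (y k)‖ ^ 2) ≤
        c * Real.sqrt ((2 / π) * ∫ t in (0 : ℝ)..π,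
          ‖∑ k ∈ Finset.Icc 1 n, Real.cos (k * t) • y k‖ ^ 2))
    (x : ℕ → X) :
    Real.sqrt ((2 / π) * ∫ t in (0 : ℝ)..π,
        ‖∑ k ∈ Finset.Icc 1 n, Real.cos (k * t) • T (x k)‖ ^ 2) ≤
      9 * c * Real.sqrt ((2 / π) * ∫ t in (0 : ℝ)..π,
        ‖∑ k ∈ Finset.Icc 1 n, Real.sin (k * t) • x k‖ ^ 2) := by
  have hπ : (0:ℝ) < π := Real.pi_pos
  set A : Finset ℕ := Finset.Icc 1 n with hA
  set f : ℝ → Y := fun t => ∑ k ∈ A, Real.cos ((k:ℝ) * t) • T (x k) with hf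
  set g : ℝ → X := fun t => ∑ k ∈ A, Real.sin ((k:ℝ) * t) • x k with hg
  -- continuity
  have contf : Continuous f := by
    rw [hf]
    exact continuous_finset_sum _ fun k _ =>
      ((Real.continuous_cos.comp (continuous_const.mul continuous_id)).smul continuous_const)
  have contg : Continuous g := by
    rw [hg]
    exact continuous_finset_sum _ fun k _ =>
      ((Real.continuous_sin.comp (continuous_const.mul continuous_id)).smul continuous_const)
  -- periodicity
  have perf : ∀ t, f (t + 2 * π) = f t := by
    intro t
    rw [hf]
    exact Finset.sum_congr rfl fun k _ => by rw [stmt10_cos_per]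
  have perg : ∀ t, g (t + 2 * π) = g t := by
    intro t
    rw [hg]
    exact Finset.sum_congr rfl fun k _ => by rw [stmt10_sin_per]
  -- symmetry
  have symf : ∀ t, ‖f (-t)‖ = ‖f t‖ := by
    intro t
    rw [hf]
    congr 1
    exact Finset.sum_congr rfl fun k _ => by
      rw [show (k:ℝ) * (-t) = -((k:ℝ) * t) by ring, Real.cos_neg]
  have symg : ∀ t, ‖g (-t)‖ = ‖g t‖ := by
    intro t
    have : g (-t) = - g t := by
      rw [hg]
      simp only
      rw [← Finset.sum_neg_distrib]
      exact Finset.sum_congr rfl fun k _ => by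
        rw [show (k:ℝ) * (-t) = -((k:ℝ) * t) by ring, Real.sin_neg, neg_smul]
    rw [this, norm_neg]
  set M : ℕ := n + 1 with hM
  have hMpos : (0:ℝ) < (M:ℝ) := by
    rw [hM]; push_cast; positivity
  set τ : ℝ := 2 * π / (M:ℝ) with hτ
  -- Step 1: for every j, the translated difference is controlled by the hypothesis.
  have keyj : ∀ j : ℕ, ∫ t in (0:ℝ)..2 * π, ‖f t - f (t - (j:ℝ) * τ)‖ ^ 2
      ≤ 4 * c ^ 2 * ∫ t in (0:ℝ)..2 * π, ‖g t‖ ^ 2 := by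
    intro j
    set θ : ℝ := (j:ℝ) * τ / 2 with hθ
    set Sf : ℝ → Y := fun t => ∑ k ∈ A, (Real.sin ((k:ℝ) * θ) * Real.sin ((k:ℝ) * t)) • T (x k)
      with hSf
    set Sg : ℝ → X := fun t => ∑ k ∈ A, (Real.sin ((k:ℝ) * θ) * Real.cos ((k:ℝ) * t)) • x k
      with hSg
    have contSf : Continuous Sf := by
      rw [hSf]
      exact continuous_finset_sum _ fun k _ =>
        (((continuous_const.mul
          (Real.continuous_sin.comp (continuous_const.mul continuous_id)))).smul continuous_const)
    have contSg : Continuous Sg := by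
      rw [hSg]
      exact continuous_finset_sum _ fun k _ =>
        (((continuous_const.mul
          (Real.continuous_cos.comp (continuous_const.mul continuous_id)))).smul continuous_const)
    have perSf : ∀ t, Sf (t + 2 * π) = Sf t := by
      intro t
      rw [hSf]
      exact Finset.sum_congr rfl fun k _ => by rw [stmt10_sin_per]
    have perSg : ∀ t, Sg (t + 2 * π) = Sg t := by
      intro t
      rw [hSg]
      exact Finset.sum_congr rfl fun k _ => by rw [stmt10_cos_per]
    have symSf : ∀ t, ‖Sf (-t)‖ = ‖Sf t‖ := by
      intro t
      have : Sf (-t) = - Sf t := by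
        rw [hSf]
        simp only
        rw [← Finset.sum_neg_distrib]
        exact Finset.sum_congr rfl fun k _ => by
          rw [show (k:ℝ) * (-t) = -((k:ℝ) * t) by ring, Real.sin_neg, mul_neg, neg_smul]
      rw [this, norm_neg]
    have symSg : ∀ t, ‖Sg (-t)‖ = ‖Sg t‖ := by
      intro t
      congr 1
      rw [hSg]
      exact Finset.sum_congr rfl fun k _ => by
        rw [show (k:ℝ) * (-t) = -((k:ℝ) * t) by ring, Real.cos_neg]
    -- nonnegativity of basic integrals
    have iSfnn : 0 ≤ ∫ t in (0:ℝ)..π, ‖Sf t‖ ^ 2 :=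
      intervalIntegral.integral_nonneg hπ.le fun t _ => by positivity
    have iSgnn : 0 ≤ ∫ t in (0:ℝ)..π, ‖Sg t‖ ^ 2 :=
      intervalIntegral.integral_nonneg hπ.le fun t _ => by positivity
    -- instantiate the hypothesis
    have hAB : ∫ t in (0:ℝ)..π, ‖Sf t‖ ^ 2 ≤ c ^ 2 * ∫ t in (0:ℝ)..π, ‖Sg t‖ ^ 2 := by
      have hy := h fun k => Real.sin ((k:ℝ) * θ) • x k
      have e1 : ∀ t : ℝ, ∑ k ∈ Finset.Icc 1 n,
          Real.sin ((k:ℝ) * t) • T (Real.sin ((k:ℝ) * θ) • x k) = Sf t := by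
        intro t
        rw [hSf, ← hA]
        exact Finset.sum_congr rfl fun k _ => by
          rw [map_smul, smul_smul, mul_comm]
      have e2 : ∀ t : ℝ, ∑ k ∈ Finset.Icc 1 n,
          Real.cos ((k:ℝ) * t) • (Real.sin ((k:ℝ) * θ) • x k) = Sg t := by
        intro t
        rw [hSg, ← hA]
        exact Finset.sum_congr rfl fun k _ => by
          rw [smul_smul, mul_comm]
      rw [← hA] at e1 e2
      simp only [e1, e2] at hy
      have lnn : 0 ≤ (2 / π) * ∫ t in (0:ℝ)..π, ‖Sf t‖ ^ 2 := by positivity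
      have rnn : 0 ≤ (2 / π) * ∫ t in (0:ℝ)..π, ‖Sg t‖ ^ 2 := by positivity
      have hsq := mul_self_le_mul_self (Real.sqrt_nonneg _) hy
      rw [Real.mul_self_sqrt lnn] at hsq
      have hsq2 : (2 / π) * (∫ t in (0:ℝ)..π, ‖Sf t‖ ^ 2)
          ≤ c ^ 2 * ((2 / π) * ∫ t in (0:ℝ)..π, ‖Sg t‖ ^ 2) := by
        calc (2 / π) * (∫ t in (0:ℝ)..π, ‖Sf t‖ ^ 2)
            ≤ (c * Real.sqrt ((2 / π) * ∫ t in (0:ℝ)..π, ‖Sg t‖ ^ 2))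
              * (c * Real.sqrt ((2 / π) * ∫ t in (0:ℝ)..π, ‖Sg t‖ ^ 2)) := hsq
          _ = c ^ 2 * (Real.sqrt ((2 / π) * ∫ t in (0:ℝ)..π, ‖Sg t‖ ^ 2)
              * Real.sqrt ((2 / π) * ∫ t in (0:ℝ)..π, ‖Sg t‖ ^ 2)) := by ring
          _ = c ^ 2 * ((2 / π) * ∫ t in (0:ℝ)..π, ‖Sg t‖ ^ 2) := by
              rw [Real.mul_self_sqrt rnn]
      have h2π : (0:ℝ) < 2 / π := by positivity
      have hsq3 : (2 / π) * (∫ t in (0:ℝ)..π, ‖Sf t‖ ^ 2)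
          ≤ (2 / π) * (c ^ 2 * ∫ t in (0:ℝ)..π, ‖Sg t‖ ^ 2) := by
        calc (2 / π) * (∫ t in (0:ℝ)..π, ‖Sf t‖ ^ 2)
            ≤ c ^ 2 * ((2 / π) * ∫ t in (0:ℝ)..π, ‖Sg t‖ ^ 2) := hsq2
          _ = (2 / π) * (c ^ 2 * ∫ t in (0:ℝ)..π, ‖Sg t‖ ^ 2) := by ring
      exact (mul_le_mul_iff_right₀ h2π).mp hsq3
    -- pointwise identities
    have hF2 : ∀ t, f (t + θ) - f (t - θ) = (-2 : ℝ) • Sf t := by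
      intro t
      rw [hf, hSf]
      simp only
      exact stmt10_cos_diff A (fun k => T (x k)) θ t
    have hG2 : ∀ t, g (t + θ) - g (t - θ) = (2 : ℝ) • Sg t := by
      intro t
      rw [hg, hSg]
      simp only
      exact stmt10_sin_diff A x θ t
    -- the translated difference
    have perFj : ∀ t, (f (t + 2 * π) - f (t + 2 * π - (j:ℝ) * τ)) = f t - f (t - (j:ℝ) * τ) := by
      intro t
      rw [perf t]
      congr 1
      rw [show t + 2 * π - (j:ℝ) * τ = (t - (j:ℝ) * τ) + 2 * π by ring, perf]
    have hD : ∀ t : ℝ, f (t + θ) - f (t + θ - (j:ℝ) * τ) = (-2 : ℝ) • Sf t := by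
      intro t
      have e : t + θ - (j:ℝ) * τ = t - θ := by rw [hθ]; ring
      rw [e]
      exact hF2 t
    have step12 : ∫ t in (0:ℝ)..2 * π, ‖f t - f (t - (j:ℝ) * τ)‖ ^ 2
        = 4 * ∫ t in (0:ℝ)..2 * π, ‖Sf t‖ ^ 2 := by
      have hpt4 : ∀ t : ℝ, ‖(-2:ℝ) • Sf t‖ ^ 2 = 4 * ‖Sf t‖ ^ 2 := by
        intro t
        rw [norm_smul, Real.norm_eq_abs, show |(-2:ℝ)| = 2 by norm_num]
        ring
      calc ∫ t in (0:ℝ)..2 * π, ‖f t - f (t - (j:ℝ) * τ)‖ ^ 2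
          = ∫ t in (0:ℝ)..2 * π, ‖f (t + θ) - f (t + θ - (j:ℝ) * τ)‖ ^ 2 :=
            (stmt10_transl (fun t => f t - f (t - (j:ℝ) * τ)) perFj θ).symm
        _ = ∫ t in (0:ℝ)..2 * π, ‖(-2:ℝ) • Sf t‖ ^ 2 := by simp only [hD]
        _ = ∫ t in (0:ℝ)..2 * π, 4 * ‖Sf t‖ ^ 2 := by simp only [hpt4]
        _ = 4 * ∫ t in (0:ℝ)..2 * π, ‖Sf t‖ ^ 2 := intervalIntegral.integral_const_mul 4 _
    have step3 : ∫ t in (0:ℝ)..2 * π, ‖Sf t‖ ^ 2 = 2 * ∫ t in (0:ℝ)..π, ‖Sf t‖ ^ 2 :=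
      stmt10_doubling Sf contSf perSf symSf
    have step4 : ∫ t in (0:ℝ)..2 * π, ‖Sg t‖ ^ 2 = 2 * ∫ t in (0:ℝ)..π, ‖Sg t‖ ^ 2 :=
      stmt10_doubling Sg contSg perSg symSg
    -- bound for the g-side difference over the full period
    have step5 : 4 * ∫ t in (0:ℝ)..2 * π, ‖Sg t‖ ^ 2
        ≤ 4 * ∫ t in (0:ℝ)..2 * π, ‖g t‖ ^ 2 := by
      have hpt : ∀ t : ℝ, 4 * ‖Sg t‖ ^ 2 = ‖g (t + θ) - g (t - θ)‖ ^ 2 := by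
        intro t
        rw [hG2 t, norm_smul, Real.norm_eq_abs]
        rw [show |(2:ℝ)| = 2 by norm_num]
        ring
      have hineq : ∀ t : ℝ, ‖g (t + θ) - g (t - θ)‖ ^ 2
          ≤ 2 * ‖g (t + θ)‖ ^ 2 + 2 * ‖g (t - θ)‖ ^ 2 := by
        intro t
        have h1 := norm_sub_le (g (t + θ)) (g (t - θ))
        have h2 := mul_self_le_mul_self (norm_nonneg (g (t + θ) - g (t - θ))) h1
        nlinarith [h2, sq_nonneg (‖g (t + θ)‖ - ‖g (t - θ)‖)]
      have cont1 : Continuous fun t => ‖g (t + θ) - g (t - θ)‖ ^ 2 := by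
        apply Continuous.pow
        apply Continuous.norm
        exact (contg.comp (continuous_id.add continuous_const)).sub
          (contg.comp (continuous_id.sub continuous_const))
      have cont2 : Continuous fun t => 2 * ‖g (t + θ)‖ ^ 2 + 2 * ‖g (t - θ)‖ ^ 2 := by
        apply Continuous.add
        · exact continuous_const.mul
            (((contg.comp (continuous_id.add continuous_const)).norm).pow 2)
        · exact continuous_const.mul
            (((contg.comp (continuous_id.sub continuous_const)).norm).pow 2)
      have hmono : ∫ t in (0:ℝ)..2 * π, ‖g (t + θ) - g (t - θ)‖ ^ 2
          ≤ ∫ t in (0:ℝ)..2 * π, (2 * ‖g (t + θ)‖ ^ 2 + 2 * ‖g (t - θ)‖ ^ 2) := by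
        apply intervalIntegral.integral_mono_on (by positivity)
          (cont1.intervalIntegrable _ _) (cont2.intervalIntegrable _ _)
        intro t _
        exact hineq t
      have hsplit : ∫ t in (0:ℝ)..2 * π, (2 * ‖g (t + θ)‖ ^ 2 + 2 * ‖g (t - θ)‖ ^ 2)
          = 2 * (∫ t in (0:ℝ)..2 * π, ‖g (t + θ)‖ ^ 2)
            + 2 * ∫ t in (0:ℝ)..2 * π, ‖g (t - θ)‖ ^ 2 := by
        rw [intervalIntegral.integral_add]
        · rw [intervalIntegral.integral_const_mul, intervalIntegral.integral_const_mul]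
        · exact (continuous_const.mul
            (((contg.comp (continuous_id.add continuous_const)).norm).pow 2)).intervalIntegrable _ _
        · exact (continuous_const.mul
            (((contg.comp (continuous_id.sub continuous_const)).norm).pow 2)).intervalIntegrable _ _
      have htr1 : ∫ t in (0:ℝ)..2 * π, ‖g (t + θ)‖ ^ 2 = ∫ t in (0:ℝ)..2 * π, ‖g t‖ ^ 2 :=
        stmt10_transl g perg θ
      have htr2 : ∫ t in (0:ℝ)..2 * π, ‖g (t - θ)‖ ^ 2 = ∫ t in (0:ℝ)..2 * π, ‖g t‖ ^ 2 := by
        have := stmt10_transl g perg (-θ)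
        rw [← this]
        apply intervalIntegral.integral_congr
        intro t _
        show ‖g (t - θ)‖ ^ 2 = ‖g (t + -θ)‖ ^ 2
        rw [sub_eq_add_neg]
      calc 4 * ∫ t in (0:ℝ)..2 * π, ‖Sg t‖ ^ 2
          = ∫ t in (0:ℝ)..2 * π, ‖g (t + θ) - g (t - θ)‖ ^ 2 := by
            simp only [← hpt]
            rw [intervalIntegral.integral_const_mul]
        _ ≤ 2 * (∫ t in (0:ℝ)..2 * π, ‖g (t + θ)‖ ^ 2)
            + 2 * ∫ t in (0:ℝ)..2 * π, ‖g (t - θ)‖ ^ 2 := by rw [← hsplit]; exact hmono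
        _ = 4 * ∫ t in (0:ℝ)..2 * π, ‖g t‖ ^ 2 := by rw [htr1, htr2]; ring
    -- combine
    calc ∫ t in (0:ℝ)..2 * π, ‖f t - f (t - (j:ℝ) * τ)‖ ^ 2
        = 4 * ∫ t in (0:ℝ)..2 * π, ‖Sf t‖ ^ 2 := step12
      _ = 4 * (2 * ∫ t in (0:ℝ)..π, ‖Sf t‖ ^ 2) := by rw [step3]
      _ ≤ 4 * (2 * (c ^ 2 * ∫ t in (0:ℝ)..π, ‖Sg t‖ ^ 2)) := by nlinarith [hAB]
      _ = c ^ 2 * (4 * (2 * ∫ t in (0:ℝ)..π, ‖Sg t‖ ^ 2)) := by ring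
      _ = c ^ 2 * (4 * ∫ t in (0:ℝ)..2 * π, ‖Sg t‖ ^ 2) := by rw [step4]
      _ ≤ c ^ 2 * (4 * ∫ t in (0:ℝ)..2 * π, ‖g t‖ ^ 2) := by
          apply mul_le_mul_of_nonneg_left step5 (by positivity)
      _ = 4 * c ^ 2 * ∫ t in (0:ℝ)..2 * π, ‖g t‖ ^ 2 := by ring
  -- Step 2: averaging identity over the n+1 translates
  have hsumF : ∀ t : ℝ, ∑ j ∈ Finset.range M, (f t - f (t - (j:ℝ) * τ)) = (M:ℝ) • f t := by
    intro t
    rw [Finset.sum_sub_distrib]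
    have hz : ∑ j ∈ Finset.range M, f (t - (j:ℝ) * τ) = 0 := by
      rw [hf]
      simp only
      rw [Finset.sum_comm]
      apply Finset.sum_eq_zero
      intro k hk
      rw [← Finset.sum_smul]
      have hk' : 1 ≤ k ∧ k ≤ n := Finset.mem_Icc.mp (by rwa [hA] at hk)
      have hkM : k < M := by rw [hM]; omega
      rw [hτ]
      rw [stmt10_cos_sum_vanish hk'.1 hkM t, zero_smul]
    rw [hz, sub_zero, Finset.sum_const, Finset.card_range]
    exact (Nat.cast_smul_eq_nsmul ℝ M (f t)).symm
  have hpt : ∀ t : ℝ, (M:ℝ) * ‖f t‖ ^ 2 ≤ ∑ j ∈ Finset.range M, ‖f t - f (t - (j:ℝ) * τ)‖ ^ 2 := by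
    intro t
    have h1 : (M:ℝ) * ‖f t‖ ≤ ∑ j ∈ Finset.range M, ‖f t - f (t - (j:ℝ) * τ)‖ := by
      calc (M:ℝ) * ‖f t‖ = ‖(M:ℝ) • f t‖ := by
            rw [norm_smul, Real.norm_eq_abs, abs_of_nonneg hMpos.le]
        _ = ‖∑ j ∈ Finset.range M, (f t - f (t - (j:ℝ) * τ))‖ := by rw [hsumF]
        _ ≤ ∑ j ∈ Finset.range M, ‖f t - f (t - (j:ℝ) * τ)‖ := norm_sum_le _ _
    have hcs : (∑ j ∈ Finset.range M, ‖f t - f (t - (j:ℝ) * τ)‖) ^ 2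
        ≤ (M:ℝ) * ∑ j ∈ Finset.range M, ‖f t - f (t - (j:ℝ) * τ)‖ ^ 2 := by
      have := Finset.sum_mul_sq_le_sq_mul_sq (Finset.range M) (fun _ => (1:ℝ))
        (fun j => ‖f t - f (t - (j:ℝ) * τ)‖)
      simpa using this
    have hsq : ((M:ℝ) * ‖f t‖) ^ 2
        ≤ (M:ℝ) * ∑ j ∈ Finset.range M, ‖f t - f (t - (j:ℝ) * τ)‖ ^ 2 := by
      calc ((M:ℝ) * ‖f t‖) ^ 2 ≤ (∑ j ∈ Finset.range M, ‖f t - f (t - (j:ℝ) * τ)‖) ^ 2 := by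
            apply pow_le_pow_left₀ (by positivity) h1
        _ ≤ (M:ℝ) * ∑ j ∈ Finset.range M, ‖f t - f (t - (j:ℝ) * τ)‖ ^ 2 := hcs
    have hsq' : (M:ℝ) * ((M:ℝ) * ‖f t‖ ^ 2)
        ≤ (M:ℝ) * ∑ j ∈ Finset.range M, ‖f t - f (t - (j:ℝ) * τ)‖ ^ 2 := by
      calc (M:ℝ) * ((M:ℝ) * ‖f t‖ ^ 2) = ((M:ℝ) * ‖f t‖) ^ 2 := by ring
        _ ≤ (M:ℝ) * ∑ j ∈ Finset.range M, ‖f t - f (t - (j:ℝ) * τ)‖ ^ 2 := hsq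
    exact le_of_mul_le_mul_left hsq' hMpos
  -- integrate the pointwise bound
  have contFj : ∀ j : ℕ, Continuous fun t => ‖f t - f (t - (j:ℝ) * τ)‖ ^ 2 := by
    intro j
    exact ((contf.sub (contf.comp (continuous_id.sub continuous_const))).norm).pow 2
  have key2π : (M:ℝ) * ∫ t in (0:ℝ)..2 * π, ‖f t‖ ^ 2
      ≤ (M:ℝ) * (4 * c ^ 2 * ∫ t in (0:ℝ)..2 * π, ‖g t‖ ^ 2) := by
    have hmono : ∫ t in (0:ℝ)..2 * π, (M:ℝ) * ‖f t‖ ^ 2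
        ≤ ∫ t in (0:ℝ)..2 * π, ∑ j ∈ Finset.range M, ‖f t - f (t - (j:ℝ) * τ)‖ ^ 2 := by
      apply intervalIntegral.integral_mono_on (by positivity)
      · exact (continuous_const.mul ((contf.norm).pow 2)).intervalIntegrable _ _
      · exact (continuous_finset_sum _ fun j _ => contFj j).intervalIntegrable _ _
      · intro t _
        exact hpt t
    have hsum : ∫ t in (0:ℝ)..2 * π, ∑ j ∈ Finset.range M, ‖f t - f (t - (j:ℝ) * τ)‖ ^ 2
        = ∑ j ∈ Finset.range M, ∫ t in (0:ℝ)..2 * π, ‖f t - f (t - (j:ℝ) * τ)‖ ^ 2 :=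
      intervalIntegral.integral_finset_sum fun j _ => (contFj j).intervalIntegrable _ _
    calc (M:ℝ) * ∫ t in (0:ℝ)..2 * π, ‖f t‖ ^ 2
        = ∫ t in (0:ℝ)..2 * π, (M:ℝ) * ‖f t‖ ^ 2 := by
          rw [intervalIntegral.integral_const_mul]
      _ ≤ ∑ j ∈ Finset.range M, ∫ t in (0:ℝ)..2 * π, ‖f t - f (t - (j:ℝ) * τ)‖ ^ 2 := by
          rw [← hsum]; exact hmono
      _ ≤ ∑ j ∈ Finset.range M, (4 * c ^ 2 * ∫ t in (0:ℝ)..2 * π, ‖g t‖ ^ 2) :=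
          Finset.sum_le_sum fun j _ => keyj j
      _ = (M:ℝ) * (4 * c ^ 2 * ∫ t in (0:ℝ)..2 * π, ‖g t‖ ^ 2) := by
          rw [Finset.sum_const, Finset.card_range, nsmul_eq_mul]
  have key2π' : ∫ t in (0:ℝ)..2 * π, ‖f t‖ ^ 2
      ≤ 4 * c ^ 2 * ∫ t in (0:ℝ)..2 * π, ‖g t‖ ^ 2 :=
    le_of_mul_le_mul_left key2π hMpos
  -- reduce to [0, π]
  have dblf : ∫ t in (0:ℝ)..2 * π, ‖f t‖ ^ 2 = 2 * ∫ t in (0:ℝ)..π, ‖f t‖ ^ 2 :=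
    stmt10_doubling f contf perf symf
  have dblg : ∫ t in (0:ℝ)..2 * π, ‖g t‖ ^ 2 = 2 * ∫ t in (0:ℝ)..π, ‖g t‖ ^ 2 :=
    stmt10_doubling g contg perg symg
  have keyπ : ∫ t in (0:ℝ)..π, ‖f t‖ ^ 2 ≤ 4 * c ^ 2 * ∫ t in (0:ℝ)..π, ‖g t‖ ^ 2 := by
    rw [dblf, dblg] at key2π'
    linarith
  -- final computation with square roots
  have hIfnn : 0 ≤ ∫ t in (0:ℝ)..π, ‖f t‖ ^ 2 :=
    intervalIntegral.integral_nonneg hπ.le fun t _ => by positivity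
  have hIgnn : 0 ≤ ∫ t in (0:ℝ)..π, ‖g t‖ ^ 2 :=
    intervalIntegral.integral_nonneg hπ.le fun t _ => by positivity
  have h2πnn : (0:ℝ) ≤ 2 / π := by positivity
  calc Real.sqrt ((2 / π) * ∫ t in (0:ℝ)..π, ‖f t‖ ^ 2)
      ≤ Real.sqrt ((2 / π) * (4 * c ^ 2 * ∫ t in (0:ℝ)..π, ‖g t‖ ^ 2)) := by
        apply Real.sqrt_le_sqrt
        exact mul_le_mul_of_nonneg_left keyπ h2πnn
    _ = Real.sqrt ((2 * c) ^ 2 * ((2 / π) * ∫ t in (0:ℝ)..π, ‖g t‖ ^ 2)) := by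
        congr 1
        ring
    _ = (2 * c) * Real.sqrt ((2 / π) * ∫ t in (0:ℝ)..π, ‖g t‖ ^ 2) := by
        rw [Real.sqrt_mul (by positivity), Real.sqrt_sq (by positivity)]
    _ ≤ 9 * c * Real.sqrt ((2 / π) * ∫ t in (0:ℝ)..π, ‖g t‖ ^ 2) := by
        have hnn : (0:ℝ) ≤ Real.sqrt ((2 / π) * ∫ t in (0:ℝ)..π, ‖g t‖ ^ 2) :=
          Real.sqrt_nonneg _
        nlinarith
end

section
/- Let X, Y be Banach spaces and T : X → Y a bounded linear operator. If c ≥ 0 satisfies ‖(T y_k)|C_n‖ ≤ c ‖(y_k)|S_n‖ for all y_1,...,y_n ∈ X, then ‖(T x_k)|S_n‖ ≤ 2c ‖(x_k)|C_n‖ for all x_1,...,x_n ∈ X. In ideal-norm notation: ϱ(S_n, C_n) ≤ 2 ϱ(C_n, S_n) uniformly in n. -/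
open Real MeasureTheory intervalIntegral Function


/-- Symmetry identity: for an even, `2π`-periodic continuous `φ`,
`∫_{-a}^{π-a} φ + ∫_a^{π+a} φ = 2 ∫_0^π φ`. -/
lemma sym_ident (φ : ℝ → ℝ) (hφ : Continuous φ)
    (heven : ∀ s, φ (-s) = φ s) (hper : ∀ s, φ (s + 2*π) = φ s) (a : ℝ) :
    (∫ s in (-a)..(π - a), φ s) + ∫ s in a..(π + a), φ s = 2 * ∫ s in (0:ℝ)..π, φ s := by
  have hii : ∀ u v : ℝ, IntervalIntegrable φ volume u v := fun u v => hφ.intervalIntegrable u v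
  have h1 : (∫ s in (-a)..(π - a), φ s) = (∫ s in (-a)..(0:ℝ), φ s) + ∫ s in (0:ℝ)..(π - a), φ s :=
    (integral_add_adjacent_intervals (hii _ _) (hii _ _)).symm
  have h2 : (∫ s in a..(π + a), φ s) = (∫ s in a..π, φ s) + ∫ s in π..(π + a), φ s :=
    (integral_add_adjacent_intervals (hii _ _) (hii _ _)).symm
  have h3 : (∫ s in (-a)..(0:ℝ), φ s) = ∫ s in (0:ℝ)..a, φ s := by
    have := integral_comp_neg (a := 0) (b := a) (f := φ)
    simp only [neg_zero] at this
    rw [← this]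
    exact integral_congr (fun s _ => (heven s))
  have h4 : (∫ s in π..(π + a), φ s) = ∫ s in (π - a)..π, φ s := by
    have := integral_comp_sub_left (a := π - a) (b := π) (f := φ) (2*π)
    have h2π : (∫ x in (π - a)..π, φ (2*π - x)) = ∫ x in π..(π + a), φ x := by
      rw [this]; ring_nf
    rw [← h2π]
    refine (integral_congr (fun s _ => ?_)).symm
    have : 2*π - s = -s + 2*π := by ring
    rw [this, hper, heven]
  rw [h1, h2, h3, h4]
  have h5 : (∫ s in (0:ℝ)..a, φ s) + (∫ s in a..π, φ s) = ∫ s in (0:ℝ)..π, φ s :=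
    integral_add_adjacent_intervals (hii _ _) (hii _ _)
  have h6 : (∫ s in (0:ℝ)..(π-a), φ s) + (∫ s in (π-a)..π, φ s) = ∫ s in (0:ℝ)..π, φ s :=
    integral_add_adjacent_intervals (hii _ _) (hii _ _)
  linarith

/-- Fubini for continuous functions on a rectangle `[0,p] × [0,q]`. -/
lemma fubini_cont (f : ℝ → ℝ → ℝ) (hf : Continuous (uncurry f)) {p q : ℝ}
    (hp : 0 ≤ p) (hq : 0 ≤ q) :
    ∫ t in (0:ℝ)..p, ∫ s in (0:ℝ)..q, f t s = ∫ s in (0:ℝ)..q, ∫ t in (0:ℝ)..p, f t s := by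
  have hint : Integrable (uncurry f)
      ((volume.restrict (Set.Ioc (0:ℝ) p)).prod (volume.restrict (Set.Ioc (0:ℝ) q))) := by
    rw [Measure.prod_restrict]
    have : IntegrableOn (uncurry f) (Set.Icc (0:ℝ) p ×ˢ Set.Icc (0:ℝ) q)
        (volume.prod volume) := by
      exact hf.continuousOn.integrableOn_compact (isCompact_Icc.prod isCompact_Icc)
    exact this.mono_set (Set.prod_mono Set.Ioc_subset_Icc_self Set.Ioc_subset_Icc_self)
  have := MeasureTheory.integral_integral_swap hint
  simpa [intervalIntegral.integral_of_le hp, intervalIntegral.integral_of_le hq] using this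

/-- Cauchy–Schwarz: `‖∫_0^L g‖² ≤ L ∫_0^L ‖g‖²` for continuous `g`. -/
lemma cs_ineq {Y : Type*} [NormedAddCommGroup Y] [NormedSpace ℝ Y]
    (g : ℝ → Y) (hg : Continuous g) {L : ℝ} (hL : 0 < L) :
    ‖∫ t in (0:ℝ)..L, g t‖ ^ 2 ≤ L * ∫ t in (0:ℝ)..L, ‖g t‖ ^ 2 := by
  set A : ℝ := ∫ t in (0:ℝ)..L, ‖g t‖ ^ 2 with hA
  have hA0 : 0 ≤ A := intervalIntegral.integral_nonneg hL.le (fun t _ => sq_nonneg _)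
  have hnorm : ‖∫ t in (0:ℝ)..L, g t‖ ≤ ∫ t in (0:ℝ)..L, ‖g t‖ :=
    intervalIntegral.norm_integral_le_integral_norm hL.le
  have key : ∀ ε : ℝ, 0 < ε → (∫ t in (0:ℝ)..L, ‖g t‖) ≤ A / (2*ε) + ε * L / 2 := by
    intro ε hε
    have hpt : ∀ t ∈ Set.uIcc (0:ℝ) L, ‖g t‖ ≤ ‖g t‖ ^ 2 / (2*ε) + ε / 2 := by
      intro t _
      have h0 : 0 ≤ (‖g t‖ - ε) ^ 2 := sq_nonneg _
      have h2ε : (0:ℝ) < 2*ε := by linarith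
      rw [div_add' _ _ _ h2ε.ne', le_div_iff₀ h2ε]
      nlinarith [sq_nonneg (‖g t‖ - ε)]
    have := intervalIntegral.integral_mono_on hL.le (hg.norm.intervalIntegrable (μ := volume) 0 L)
      ((((hg.norm.pow 2).div_const _).add continuous_const).intervalIntegrable 0 L)
      (fun t ht => hpt t (Set.mem_uIcc_of_le ht.1 ht.2))
    calc (∫ t in (0:ℝ)..L, ‖g t‖) ≤ ∫ t in (0:ℝ)..L, (‖g t‖ ^ 2 / (2*ε) + ε / 2) := this
      _ = A / (2*ε) + ε * L / 2 := by
          rw [intervalIntegral.integral_add (f := fun t => ‖g t‖ ^ 2 / (2*ε)) (g := fun _ => ε / 2) (((hg.norm.pow 2).div_const _).intervalIntegrable _ _)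
            (continuous_const.intervalIntegrable _ _)]
          simp [intervalIntegral.integral_div, hA]
          ring
  have hInt : (∫ t in (0:ℝ)..L, ‖g t‖) ≤ Real.sqrt (A * L) := by
    rcases eq_or_lt_of_le hA0 with hA0' | hA0'
    · have : (∫ t in (0:ℝ)..L, ‖g t‖) ≤ 0 := by
        refine le_of_forall_pos_le_add (fun δ hδ => ?_)
        have h2 := key (2*δ/L) (by positivity)
        rw [← hA0'] at h2
        simp at h2
        calc (∫ t in (0:ℝ)..L, ‖g t‖) ≤ 2*δ/L * L / 2 := by simpa using h2
          _ = δ := by field_simp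
          _ ≤ 0 + δ := by linarith
      simpa [← hA0', Real.sqrt_eq_zero'] using this
    · have hε : (0:ℝ) < Real.sqrt (A / L) := Real.sqrt_pos.2 (by positivity)
      have h2 := key _ hε
      set r := Real.sqrt (A / L) with hr
      set S := Real.sqrt (A * L) with hS
      have h1 : r ^ 2 = A / L := Real.sq_sqrt (by positivity)
      have hS2 : S ^ 2 = A * L := Real.sq_sqrt (by positivity)
      have hrS : r * S = A := by
        have h3 : (r * S) ^ 2 = A ^ 2 := by
          rw [mul_pow, h1, hS2]; field_simp
        have h4 : r * S = Real.sqrt ((r * S) ^ 2) := (Real.sqrt_sq (by positivity)).symm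
        rw [h4, h3, Real.sqrt_sq hA0]
      have h1L : r ^ 2 * L = A := by rw [h1]; field_simp
      have heq : A / (2 * r) + r * L / 2 = S := by
        have hr0 : r ≠ 0 := hε.ne'
        field_simp
        nlinarith [h1L, hrS]
      linarith [h2, heq.le]
  calc ‖∫ t in (0:ℝ)..L, g t‖ ^ 2 ≤ (∫ t in (0:ℝ)..L, ‖g t‖) ^ 2 := by
        apply pow_le_pow_left₀ (norm_nonneg _) hnorm
    _ ≤ Real.sqrt (A * L) ^ 2 := by
        apply pow_le_pow_left₀ (intervalIntegral.integral_nonneg hL.le (fun t _ => norm_nonneg _)) hInt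
    _ = A * L := Real.sq_sqrt (by positivity)
    _ = L * A := mul_comm _ _

lemma cos_sq_integral (k : ℕ) (hk : 1 ≤ k) :
    ∫ t in (0:ℝ)..(2*π), Real.cos (k*t) ^ 2 = π := by
  have hk0 : (k:ℝ) ≠ 0 := Nat.cast_ne_zero.2 (by omega)
  have := intervalIntegral.integral_comp_mul_left (a := 0) (b := 2*π)
    (fun x => Real.cos x ^ 2) hk0
  rw [this]
  rw [integral_cos_sq]
  have h1 : Real.sin ((k:ℝ) * (2*π)) = 0 := by
    have : (k:ℝ) * (2*π) = (2*k : ℕ) * π := by push_cast; ring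
    rw [this, Real.sin_nat_mul_pi]
  simp [h1, mul_zero]
  field_simp

lemma sin_cos_integral (k : ℕ) (hk : 1 ≤ k) :
    ∫ t in (0:ℝ)..(2*π), Real.sin (k*t) * Real.cos (k*t) = 0 := by
  have hk0 : (k:ℝ) ≠ 0 := Nat.cast_ne_zero.2 (by omega)
  have := intervalIntegral.integral_comp_mul_left (a := 0) (b := 2*π)
    (fun x => Real.sin x * Real.cos x) hk0
  rw [this, integral_sin_mul_cos₁]
  have h1 : Real.sin ((k:ℝ) * (2*π)) = 0 := by
    have : (k:ℝ) * (2*π) = (2*k : ℕ) * π := by push_cast; ring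
    rw [this, Real.sin_nat_mul_pi]
  simp [h1]

lemma key_trig (k : ℕ) (hk : 1 ≤ k) (u : ℝ) :
    ∫ t in (0:ℝ)..(2*π), Real.cos (k*t) * Real.sin (k*(u - t)) = π * Real.sin (k*u) := by
  have hrw : ∀ t : ℝ, Real.cos (k*t) * Real.sin (k*(u - t))
      = Real.sin (k*u) * Real.cos (k*t) ^ 2 - Real.cos (k*u) * (Real.sin (k*t) * Real.cos (k*t)) := by
    intro t
    have : (k:ℝ) * (u - t) = k*u - k*t := by ring
    rw [this, Real.sin_sub]
    ring
  rw [intervalIntegral.integral_congr (fun t _ => hrw t)]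
  rw [intervalIntegral.integral_sub, intervalIntegral.integral_const_mul,
    intervalIntegral.integral_const_mul, cos_sq_integral k hk, sin_cos_integral k hk]
  · ring
  · exact (continuous_const.mul ((Real.continuous_cos.comp (continuous_const.mul continuous_id)).pow 2)).intervalIntegrable _ _
  · exact (continuous_const.mul ((Real.continuous_sin.comp (continuous_const.mul continuous_id)).mul
      (Real.continuous_cos.comp (continuous_const.mul continuous_id)))).intervalIntegrable _ _
lemma window_ident (Φ : ℝ → ℝ → ℝ) (hΦ : Continuous (uncurry Φ))
    (hs_even : ∀ t s, Φ t (-s) = Φ t s)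
    (hs_per : ∀ t s, Φ t (s + 2*π) = Φ t s)
    (ht_sym : ∀ t s, Φ (2*π - t) s = Φ t s) :
    (∫ t in (0:ℝ)..(2*π), ∫ s in (-t)..(π - t), Φ t s)
      = 2 * ∫ t in (0:ℝ)..π, ∫ s in (0:ℝ)..π, Φ t s := by
  have hΦt : ∀ t : ℝ, Continuous (Φ t) := fun t =>
    hΦ.comp (Continuous.prodMk_right t)
  set J : ℝ → ℝ := fun t => ∫ s in (-t)..(π - t), Φ t s with hJ
  have hJsplit : ∀ t : ℝ, J t = (∫ s in (0:ℝ)..(π - t), Φ t s) - ∫ s in (0:ℝ)..(-t), Φ t s := by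
    intro t
    have h1 : (∫ s in (0:ℝ)..(-t), Φ t s) + ∫ s in (-t)..(π - t), Φ t s
        = ∫ s in (0:ℝ)..(π - t), Φ t s :=
      integral_add_adjacent_intervals ((hΦt t).intervalIntegrable _ _)
        ((hΦt t).intervalIntegrable _ _)
    simp only [hJ]; linarith
  have hJcont : Continuous J := by
    have h1 : Continuous fun t : ℝ => ∫ s in (0:ℝ)..(π - t), Φ t s :=
      intervalIntegral.continuous_parametric_intervalIntegral_of_continuous hΦ
        (continuous_const.sub continuous_id)
    have h2 : Continuous fun t : ℝ => ∫ s in (0:ℝ)..(-t), Φ t s :=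
      intervalIntegral.continuous_parametric_intervalIntegral_of_continuous hΦ
        continuous_neg
    have : J = fun t => (∫ s in (0:ℝ)..(π - t), Φ t s) - ∫ s in (0:ℝ)..(-t), Φ t s :=
      funext hJsplit
    rw [this]; exact h1.sub h2
  have hkey : ∀ σ : ℝ, J σ + J (2*π - σ) = 2 * ∫ s in (0:ℝ)..π, Φ σ s := by
    intro σ
    have e1 : J (2*π - σ) = ∫ s in (σ - 2*π)..(σ - π), Φ σ s := by
      simp only [hJ]
      rw [intervalIntegral.integral_congr (fun s _ => ht_sym σ s)]
      have ha : -(2*π - σ) = σ - 2*π := by ring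
      have hb : π - (2*π - σ) = σ - π := by ring
      rw [ha, hb]
    have e2 : (∫ s in (σ - 2*π)..(σ - π), Φ σ s) = ∫ s in σ..(σ + π), Φ σ s := by
      have := intervalIntegral.integral_comp_sub_right (a := σ) (b := σ + π) (Φ σ) (2*π)
      have hb : σ + π - 2*π = σ - π := by ring
      rw [hb] at this
      rw [← this]
      exact intervalIntegral.integral_congr (fun s _ => by
        have : Φ σ (s - 2*π) = Φ σ ((s - 2*π) + 2*π) := (hs_per σ (s - 2*π)).symm
        rw [this]; ring_nf)
    have e3 : σ + π = π + σ := by ring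
    rw [e1, e2, e3]
    exact sym_ident (Φ σ) (hΦt σ) (hs_even σ) (hs_per σ) σ
  have hsplit2 : (∫ t in (0:ℝ)..(2*π), J t)
      = (∫ t in (0:ℝ)..π, J t) + ∫ t in π..(2*π), J t :=
    (integral_add_adjacent_intervals (hJcont.intervalIntegrable _ _)
      (hJcont.intervalIntegrable _ _)).symm
  have hrefl : (∫ t in π..(2*π), J t) = ∫ σ in (0:ℝ)..π, J (2*π - σ) := by
    have := intervalIntegral.integral_comp_sub_left (a := 0) (b := π) J (2*π)
    rw [this]
    congr 1 <;> ring
  have hfinal : (∫ t in (0:ℝ)..π, J t) + (∫ σ in (0:ℝ)..π, J (2*π - σ))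
      = ∫ σ in (0:ℝ)..π, 2 * ∫ s in (0:ℝ)..π, Φ σ s := by
    have hcomp : Continuous fun σ : ℝ => J (2*π - σ) :=
      hJcont.comp (continuous_const.sub continuous_id)
    rw [← intervalIntegral.integral_add (hJcont.intervalIntegrable 0 π)
      (hcomp.intervalIntegrable 0 π)]
    exact intervalIntegral.integral_congr (fun σ _ => hkey σ)
  rw [hsplit2, hrefl, hfinal, intervalIntegral.integral_const_mul]

noncomputable section StmtAux

variable {E : Type*} [NormedAddCommGroup E] [NormedSpace ℝ E]

/-- `∑ sin(kt) • z k`. -/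
def sinSum (n : ℕ) (z : ℕ → E) (t : ℝ) : E := ∑ k ∈ Finset.Icc 1 n, Real.sin (k*t) • z k

/-- `∑ cos(kt) • z k`. -/
def cosSum (n : ℕ) (z : ℕ → E) (t : ℝ) : E := ∑ k ∈ Finset.Icc 1 n, Real.cos (k*t) • z k

/-- `∑ cos(kt) sin(ks) • z k`. -/
def csSum (n : ℕ) (z : ℕ → E) (t s : ℝ) : E :=
  ∑ k ∈ Finset.Icc 1 n, (Real.cos (k*t) * Real.sin (k*s)) • z k

/-- `∑ sin(kt) sin(ks) • z k`. -/
def ssSum (n : ℕ) (z : ℕ → E) (t s : ℝ) : E :=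
  ∑ k ∈ Finset.Icc 1 n, (Real.sin (k*t) * Real.sin (k*s)) • z k

variable (n : ℕ) (z : ℕ → E) {α : Type*} [TopologicalSpace α]

lemma sinSum_cont_comp (g : α → ℝ) (hg : Continuous g) :
    Continuous fun a => sinSum n z (g a) := by
  unfold sinSum; apply continuous_finset_sum; intro k _
  exact (Real.continuous_sin.comp (continuous_const.mul hg)).smul continuous_const

lemma cosSum_cont_comp (g : α → ℝ) (hg : Continuous g) :
    Continuous fun a => cosSum n z (g a) := by
  unfold cosSum; apply continuous_finset_sum; intro k _
  exact (Real.continuous_cos.comp (continuous_const.mul hg)).smul continuous_const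

lemma csSum_cont_comp (g h : α → ℝ) (hg : Continuous g) (hh : Continuous h) :
    Continuous fun a => csSum n z (g a) (h a) := by
  unfold csSum; apply continuous_finset_sum; intro k _
  exact ((Real.continuous_cos.comp (continuous_const.mul hg)).mul
    (Real.continuous_sin.comp (continuous_const.mul hh))).smul continuous_const

lemma ssSum_cont_comp (g h : α → ℝ) (hg : Continuous g) (hh : Continuous h) :
    Continuous fun a => ssSum n z (g a) (h a) := by
  unfold ssSum; apply continuous_finset_sum; intro k _
  exact ((Real.continuous_sin.comp (continuous_const.mul hg)).mul
    (Real.continuous_sin.comp (continuous_const.mul hh))).smul continuous_const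

lemma cosSum_even (t : ℝ) : cosSum n z (-t) = cosSum n z t := by
  unfold cosSum
  refine Finset.sum_congr rfl fun k _ => ?_
  rw [mul_neg, Real.cos_neg]

lemma cosSum_per (t : ℝ) : cosSum n z (t + 2*π) = cosSum n z t := by
  unfold cosSum
  refine Finset.sum_congr rfl fun k _ => ?_
  have : (k:ℝ) * (t + 2*π) = k*t + k*(2*π) := by ring
  rw [this, Real.cos_add_nat_mul_two_pi]

lemma csSum_even (t s : ℝ) : csSum n z t (-s) = - csSum n z t s := by
  unfold csSum
  rw [← Finset.sum_neg_distrib]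
  refine Finset.sum_congr rfl fun k _ => ?_
  rw [mul_neg, Real.sin_neg, mul_neg, neg_smul]

lemma csSum_per (t s : ℝ) : csSum n z t (s + 2*π) = csSum n z t s := by
  unfold csSum
  refine Finset.sum_congr rfl fun k _ => ?_
  have : (k:ℝ) * (s + 2*π) = k*s + k*(2*π) := by ring
  rw [this, Real.sin_add_nat_mul_two_pi]

lemma csSum_refl (t s : ℝ) : csSum n z (2*π - t) s = csSum n z t s := by
  unfold csSum
  refine Finset.sum_congr rfl fun k _ => ?_
  have : (k:ℝ) * (2*π - t) = k*(2*π) - k*t := by ring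
  rw [this, Real.cos_nat_mul_two_pi_sub]

lemma ssSum_eq (t s : ℝ) :
    ssSum n z t s = (2⁻¹ : ℝ) • (cosSum n z (t - s) - cosSum n z (t + s)) := by
  unfold ssSum cosSum
  rw [← Finset.sum_sub_distrib, Finset.smul_sum]
  refine Finset.sum_congr rfl fun k _ => ?_
  rw [← sub_smul, smul_smul]
  congr 1
  have h1 : (k:ℝ) * (t - s) = k*t - k*s := by ring
  have h2 : (k:ℝ) * (t + s) = k*t + k*s := by ring
  rw [h1, h2, Real.cos_sub, Real.cos_add]
  ring

lemma csSum_recon [CompleteSpace E] (u : ℝ) :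
    (∫ t in (0:ℝ)..(2*π), csSum n z t (u - t)) = π • sinSum n z u := by
  unfold csSum sinSum
  rw [intervalIntegral.integral_finset_sum (μ := volume) (a := 0) (b := 2*π)
    (f := fun (k : ℕ) (t : ℝ) => (Real.cos (k*t) * Real.sin (k*(u - t))) • z k) (fun k _ =>
    ((by fun_prop : Continuous fun t:ℝ => Real.cos (k*t) * Real.sin (k*(u - t))).smul
      continuous_const).intervalIntegrable _ _)]
  rw [Finset.smul_sum]
  refine Finset.sum_congr rfl fun k hk => ?_
  rw [intervalIntegral.integral_smul_const, key_trig k (Finset.mem_Icc.1 hk).1 u, smul_smul]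


lemma stepA_complete [CompleteSpace E] :
    (∫ u in (0:ℝ)..π, ‖sinSum n z u‖^2)
      ≤ (4/π) * ∫ t in (0:ℝ)..π, ∫ s in (0:ℝ)..π, ‖csSum n z t s‖^2 := by
  have hπ : (0:ℝ) < π := Real.pi_pos
  have h2π : (0:ℝ) < 2*π := by linarith
  have hptwise : ∀ u : ℝ, ‖sinSum n z u‖^2
      ≤ (2/π) * ∫ t in (0:ℝ)..(2*π), ‖csSum n z t (u - t)‖^2 := by
    intro u
    have hg : Continuous fun t : ℝ => csSum n z t (u - t) :=
      csSum_cont_comp n z _ _ continuous_id (continuous_const.sub continuous_id)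
    have hcs := cs_ineq _ hg h2π
    rw [csSum_recon n z u] at hcs
    have hnn : ‖π • sinSum n z u‖^2 = π^2 * ‖sinSum n z u‖^2 := by
      rw [norm_smul, Real.norm_eq_abs, abs_of_pos hπ, mul_pow]
    rw [hnn] at hcs
    have hI : (0:ℝ) ≤ ∫ t in (0:ℝ)..(2*π), ‖csSum n z t (u - t)‖^2 :=
      intervalIntegral.integral_nonneg h2π.le (fun t _ => sq_nonneg _)
    rw [div_mul_eq_mul_div, le_div_iff₀ hπ]
    nlinarith
  have hUnc : Continuous (Function.uncurry fun u t : ℝ => ‖csSum n z t (u - t)‖^2) := by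
    have h0 : Continuous fun p : ℝ × ℝ => csSum n z p.2 (p.1 - p.2) :=
      csSum_cont_comp n z _ _ continuous_snd (continuous_fst.sub continuous_snd)
    exact h0.norm.pow 2
  have hinner_cont : Continuous fun u : ℝ => ∫ t in (0:ℝ)..(2*π), ‖csSum n z t (u - t)‖^2 :=
    intervalIntegral.continuous_parametric_intervalIntegral_of_continuous' hUnc 0 (2*π)
  have hmono : (∫ u in (0:ℝ)..π, ‖sinSum n z u‖^2)
      ≤ ∫ u in (0:ℝ)..π, (2/π) * ∫ t in (0:ℝ)..(2*π), ‖csSum n z t (u - t)‖^2 :=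
    intervalIntegral.integral_mono_on hπ.le
      (((sinSum_cont_comp n z _ continuous_id).norm.pow 2).intervalIntegrable 0 π)
      ((continuous_const.mul hinner_cont).intervalIntegrable 0 π)
      (fun u _ => hptwise u)
  rw [intervalIntegral.integral_const_mul] at hmono
  have hfub : (∫ u in (0:ℝ)..π, ∫ t in (0:ℝ)..(2*π), ‖csSum n z t (u - t)‖^2)
      = ∫ t in (0:ℝ)..(2*π), ∫ u in (0:ℝ)..π, ‖csSum n z t (u - t)‖^2 :=
    fubini_cont (fun u t => ‖csSum n z t (u - t)‖^2) hUnc hπ.le h2π.le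
  have hshift : ∀ t : ℝ, (∫ u in (0:ℝ)..π, ‖csSum n z t (u - t)‖^2)
      = ∫ s in (-t)..(π - t), ‖csSum n z t s‖^2 := by
    intro t
    have := intervalIntegral.integral_comp_sub_right (a := 0) (b := π)
      (fun s => ‖csSum n z t s‖^2) t
    rw [zero_sub] at this
    exact this
  have hwin : (∫ t in (0:ℝ)..(2*π), ∫ s in (-t)..(π - t), ‖csSum n z t s‖^2)
      = 2 * ∫ t in (0:ℝ)..π, ∫ s in (0:ℝ)..π, ‖csSum n z t s‖^2 := by
    apply window_ident
    · have h0 : Continuous fun p : ℝ × ℝ => csSum n z p.1 p.2 :=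
        csSum_cont_comp n z _ _ continuous_fst continuous_snd
      exact h0.norm.pow 2
    · intro t s; rw [csSum_even, norm_neg]
    · intro t s; rw [csSum_per]
    · intro t s; rw [csSum_refl]
  calc (∫ u in (0:ℝ)..π, ‖sinSum n z u‖^2)
      ≤ (2/π) * ∫ u in (0:ℝ)..π, ∫ t in (0:ℝ)..(2*π), ‖csSum n z t (u - t)‖^2 := hmono
    _ = (2/π) * ∫ t in (0:ℝ)..(2*π), ∫ s in (-t)..(π - t), ‖csSum n z t s‖^2 := by
        rw [hfub]; congr 1; exact intervalIntegral.integral_congr fun t _ => hshift t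
    _ = (2/π) * (2 * ∫ t in (0:ℝ)..π, ∫ s in (0:ℝ)..π, ‖csSum n z t s‖^2) := by rw [hwin]
    _ = (4/π) * ∫ t in (0:ℝ)..π, ∫ s in (0:ℝ)..π, ‖csSum n z t s‖^2 := by ring

lemma stepA :
    (∫ u in (0:ℝ)..π, ‖sinSum n z u‖^2)
      ≤ (4/π) * ∫ t in (0:ℝ)..π, ∫ s in (0:ℝ)..π, ‖csSum n z t s‖^2 := by
  set J : E →ₗᵢ[ℝ] UniformSpace.Completion E := UniformSpace.Completion.toComplₗᵢ with hJ
  set z' : ℕ → UniformSpace.Completion E := fun k => J (z k) with hz'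
  have h1 : ∀ u, ‖sinSum n z u‖ = ‖sinSum n z' u‖ := by
    intro u
    rw [← J.norm_map]
    congr 1
    unfold sinSum
    rw [map_sum]
    exact Finset.sum_congr rfl fun k _ => by rw [J.map_smul]
  have h2 : ∀ t s, ‖csSum n z t s‖ = ‖csSum n z' t s‖ := by
    intro t s
    rw [← J.norm_map]
    congr 1
    unfold csSum
    rw [map_sum]
    exact Finset.sum_congr rfl fun k _ => by rw [J.map_smul]
  calc (∫ u in (0:ℝ)..π, ‖sinSum n z u‖^2)
      = ∫ u in (0:ℝ)..π, ‖sinSum n z' u‖^2 :=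
        intervalIntegral.integral_congr fun u _ => by rw [h1]
    _ ≤ (4/π) * ∫ t in (0:ℝ)..π, ∫ s in (0:ℝ)..π, ‖csSum n z' t s‖^2 := stepA_complete n z'
    _ = (4/π) * ∫ t in (0:ℝ)..π, ∫ s in (0:ℝ)..π, ‖csSum n z t s‖^2 := by
        congr 1
        exact intervalIntegral.integral_congr fun t _ =>
          intervalIntegral.integral_congr fun s _ => by rw [h2]

lemma stepD (s : ℝ) :
    (∫ t in (0:ℝ)..π, ‖ssSum n z t s‖^2) ≤ ∫ u in (0:ℝ)..π, ‖cosSum n z u‖^2 := by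
  have hπ : (0:ℝ) < π := Real.pi_pos
  have hφc : Continuous fun u : ℝ => ‖cosSum n z u‖^2 :=
    (cosSum_cont_comp n z _ continuous_id).norm.pow 2
  have hφc1 : Continuous fun t : ℝ => ‖cosSum n z (t - s)‖^2 :=
    (cosSum_cont_comp n z _ (continuous_id.sub continuous_const)).norm.pow 2
  have hφc2 : Continuous fun t : ℝ => ‖cosSum n z (t + s)‖^2 :=
    (cosSum_cont_comp n z _ (continuous_id.add continuous_const)).norm.pow 2
  have hpt : ∀ t : ℝ, ‖ssSum n z t s‖^2
      ≤ 2⁻¹ * ‖cosSum n z (t - s)‖^2 + 2⁻¹ * ‖cosSum n z (t + s)‖^2 := by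
    intro t
    rw [ssSum_eq]
    have h1 : ‖(2⁻¹:ℝ) • (cosSum n z (t - s) - cosSum n z (t + s))‖
        ≤ 2⁻¹ * (‖cosSum n z (t - s)‖ + ‖cosSum n z (t + s)‖) := by
      rw [norm_smul, Real.norm_eq_abs]
      have := norm_sub_le (cosSum n z (t - s)) (cosSum n z (t + s))
      rw [abs_of_pos (by norm_num : (0:ℝ) < 2⁻¹)]
      nlinarith [this]
    nlinarith [h1, norm_nonneg ((2⁻¹:ℝ) • (cosSum n z (t - s) - cosSum n z (t + s))),
      sq_nonneg (‖cosSum n z (t - s)‖ - ‖cosSum n z (t + s)‖), norm_nonneg (cosSum n z (t - s)),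
      norm_nonneg (cosSum n z (t + s))]
  have hmono : (∫ t in (0:ℝ)..π, ‖ssSum n z t s‖^2)
      ≤ ∫ t in (0:ℝ)..π,
          (2⁻¹ * ‖cosSum n z (t - s)‖^2 + 2⁻¹ * ‖cosSum n z (t + s)‖^2) := by
    apply intervalIntegral.integral_mono_on hπ.le
    · have h0 : Continuous fun t : ℝ => ssSum n z t s :=
        ssSum_cont_comp n z _ _ continuous_id continuous_const
      exact (h0.norm.pow 2).intervalIntegrable 0 π
    · exact ((continuous_const.mul hφc1).add (continuous_const.mul hφc2)).intervalIntegrable 0 π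
    · exact fun t _ => hpt t
  have hsplit : (∫ t in (0:ℝ)..π,
        (2⁻¹ * ‖cosSum n z (t - s)‖^2 + 2⁻¹ * ‖cosSum n z (t + s)‖^2))
      = 2⁻¹ * (∫ t in (0:ℝ)..π, ‖cosSum n z (t - s)‖^2)
        + 2⁻¹ * ∫ t in (0:ℝ)..π, ‖cosSum n z (t + s)‖^2 := by
    rw [intervalIntegral.integral_add (f := fun t => 2⁻¹ * ‖cosSum n z (t - s)‖^2)
      (g := fun t => 2⁻¹ * ‖cosSum n z (t + s)‖^2)
      ((continuous_const.mul hφc1).intervalIntegrable 0 π)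
      ((continuous_const.mul hφc2).intervalIntegrable 0 π),
      intervalIntegral.integral_const_mul, intervalIntegral.integral_const_mul]
  have hc1 : (∫ t in (0:ℝ)..π, ‖cosSum n z (t - s)‖^2)
      = ∫ u in (-s)..(π - s), ‖cosSum n z u‖^2 := by
    have := intervalIntegral.integral_comp_sub_right (a := 0) (b := π)
      (fun u => ‖cosSum n z u‖^2) s
    rw [zero_sub] at this
    exact this
  have hc2 : (∫ t in (0:ℝ)..π, ‖cosSum n z (t + s)‖^2)
      = ∫ u in s..(π + s), ‖cosSum n z u‖^2 := by
    have := intervalIntegral.integral_comp_add_right (a := 0) (b := π)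
      (fun u => ‖cosSum n z u‖^2) s
    rw [zero_add] at this
    exact this
  have hsym : (∫ u in (-s)..(π - s), ‖cosSum n z u‖^2)
      + (∫ u in s..(π + s), ‖cosSum n z u‖^2)
      = 2 * ∫ u in (0:ℝ)..π, ‖cosSum n z u‖^2 := by
    apply sym_ident _ hφc
    · intro u; rw [cosSum_even]
    · intro u; rw [cosSum_per]
  calc (∫ t in (0:ℝ)..π, ‖ssSum n z t s‖^2)
      ≤ _ := hmono
    _ = 2⁻¹ * (∫ t in (0:ℝ)..π, ‖cosSum n z (t - s)‖^2)
        + 2⁻¹ * ∫ t in (0:ℝ)..π, ‖cosSum n z (t + s)‖^2 := hsplit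
    _ = ∫ u in (0:ℝ)..π, ‖cosSum n z u‖^2 := by rw [hc1, hc2]; linarith [hsym]

end StmtAux

section Core

variable {X Y : Type*} [NormedAddCommGroup X] [NormedSpace ℝ X]
  [NormedAddCommGroup Y] [NormedSpace ℝ Y]

lemma core (n : ℕ) (x : ℕ → X) (z : ℕ → Y) (c : ℝ)
    (hB : ∀ s : ℝ, (∫ t in (0:ℝ)..π, ‖csSum n z t s‖^2)
        ≤ c^2 * ∫ t in (0:ℝ)..π, ‖ssSum n x t s‖^2) :
    (∫ t in (0:ℝ)..π, ‖sinSum n z t‖^2)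
      ≤ 4*c^2 * ∫ t in (0:ℝ)..π, ‖cosSum n x t‖^2 := by
  have hπ : (0:ℝ) < π := Real.pi_pos
  have hc2 : (0:ℝ) ≤ c^2 := sq_nonneg c
  have hGunc : Continuous (Function.uncurry fun t s : ℝ => ‖csSum n z t s‖^2) := by
    have h0 : Continuous fun p : ℝ × ℝ => csSum n z p.1 p.2 :=
      csSum_cont_comp n z _ _ continuous_fst continuous_snd
    exact h0.norm.pow 2
  have hfub : (∫ t in (0:ℝ)..π, ∫ s in (0:ℝ)..π, ‖csSum n z t s‖^2)
      = ∫ s in (0:ℝ)..π, ∫ t in (0:ℝ)..π, ‖csSum n z t s‖^2 :=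
    fubini_cont _ hGunc hπ.le hπ.le
  have hGswap : Continuous (Function.uncurry fun s t : ℝ => ‖csSum n z t s‖^2) := by
    have h0 : Continuous fun p : ℝ × ℝ => csSum n z p.2 p.1 :=
      csSum_cont_comp n z _ _ continuous_snd continuous_fst
    exact h0.norm.pow 2
  have hHswap : Continuous (Function.uncurry fun s t : ℝ => ‖ssSum n x t s‖^2) := by
    have h0 : Continuous fun p : ℝ × ℝ => ssSum n x p.2 p.1 :=
      ssSum_cont_comp n x _ _ continuous_snd continuous_fst
    exact h0.norm.pow 2
  have hGcont : Continuous fun s : ℝ => ∫ t in (0:ℝ)..π, ‖csSum n z t s‖^2 :=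
    intervalIntegral.continuous_parametric_intervalIntegral_of_continuous' hGswap 0 π
  have hHcont : Continuous fun s : ℝ => ∫ t in (0:ℝ)..π, ‖ssSum n x t s‖^2 :=
    intervalIntegral.continuous_parametric_intervalIntegral_of_continuous' hHswap 0 π
  have hmono1 : (∫ s in (0:ℝ)..π, ∫ t in (0:ℝ)..π, ‖csSum n z t s‖^2)
      ≤ ∫ s in (0:ℝ)..π, c^2 * ∫ t in (0:ℝ)..π, ‖ssSum n x t s‖^2 :=
    intervalIntegral.integral_mono_on hπ.le (hGcont.intervalIntegrable 0 π)
      ((continuous_const.mul hHcont).intervalIntegrable 0 π) (fun s _ => hB s)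
  rw [intervalIntegral.integral_const_mul] at hmono1
  have hmono2 : (∫ s in (0:ℝ)..π, ∫ t in (0:ℝ)..π, ‖ssSum n x t s‖^2)
      ≤ ∫ s in (0:ℝ)..π, (∫ u in (0:ℝ)..π, ‖cosSum n x u‖^2) :=
    intervalIntegral.integral_mono_on hπ.le (hHcont.intervalIntegrable 0 π)
      (continuous_const.intervalIntegrable 0 π) (fun s _ => stepD n x s)
  rw [intervalIntegral.integral_const, smul_eq_mul, sub_zero] at hmono2
  have hA := stepA n z
  have h4π : (0:ℝ) ≤ 4/π := by positivity
  have hchain : (4/π) * (∫ t in (0:ℝ)..π, ∫ s in (0:ℝ)..π, ‖csSum n z t s‖^2)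
      ≤ (4/π) * (c^2 * (π * ∫ u in (0:ℝ)..π, ‖cosSum n x u‖^2)) := by
    apply mul_le_mul_of_nonneg_left _ h4π
    rw [hfub]
    calc (∫ s in (0:ℝ)..π, ∫ t in (0:ℝ)..π, ‖csSum n z t s‖^2)
        ≤ c^2 * ∫ s in (0:ℝ)..π, ∫ t in (0:ℝ)..π, ‖ssSum n x t s‖^2 := hmono1
      _ ≤ c^2 * (π * ∫ u in (0:ℝ)..π, ‖cosSum n x u‖^2) :=
          mul_le_mul_of_nonneg_left hmono2 hc2
  have hfin : (4/π) * (c^2 * (π * ∫ u in (0:ℝ)..π, ‖cosSum n x u‖^2))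
      = 4*c^2 * ∫ u in (0:ℝ)..π, ‖cosSum n x u‖^2 := by
    field_simp
  linarith [hA, hchain]

end Core


/-- Proposition 1: `ϱ(𝒮_n,𝒞_n) ≤ 2 ϱ(𝒞_n,𝒮_n)`, in the form: any admissible constant `c`
for `ϱ(T|𝒞_n,𝒮_n)` makes `2c` admissible for `ϱ(T|𝒮_n,𝒞_n)`. -/
theorem stmt11 {X Y : Type*} [NormedAddCommGroup X] [NormedSpace ℝ X]
    [NormedAddCommGroup Y] [NormedSpace ℝ Y]
    (T : X →L[ℝ] Y) {n : ℕ} (c : ℝ) (hc : 0 ≤ c)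
    (h : ∀ y : ℕ → X,
      Real.sqrt ((2 / π) * ∫ t in (0 : ℝ)..π,
          ‖∑ k ∈ Finset.Icc 1 n, Real.cos (k * t) • T (y k)‖ ^ 2) ≤
        c * Real.sqrt ((2 / π) * ∫ t in (0 : ℝ)..π,
          ‖∑ k ∈ Finset.Icc 1 n, Real.sin (k * t) • y k‖ ^ 2))
    (x : ℕ → X) :
    Real.sqrt ((2 / π) * ∫ t in (0 : ℝ)..π,
        ‖∑ k ∈ Finset.Icc 1 n, Real.sin (k * t) • T (x k)‖ ^ 2) ≤
      2 * c * Real.sqrt ((2 / π) * ∫ t in (0 : ℝ)..π,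
        ‖∑ k ∈ Finset.Icc 1 n, Real.cos (k * t) • x k‖ ^ 2) := by
  have hπ : (0:ℝ) < π := Real.pi_pos
  have hB : ∀ s : ℝ, (∫ t in (0:ℝ)..π, ‖csSum n (fun k => T (x k)) t s‖^2)
      ≤ c^2 * ∫ t in (0:ℝ)..π, ‖ssSum n x t s‖^2 := by
    intro s
    have hs := h (fun k => Real.sin (k*s) • x k)
    simp only [_root_.map_smul, smul_smul] at hs
    unfold csSum ssSum
    beta_reduce
    have hA0 : (0:ℝ) ≤ ∫ t in (0:ℝ)..π,
        ‖∑ k ∈ Finset.Icc 1 n, (Real.cos (↑k * t) * Real.sin (↑k * s)) • T (x k)‖^2 :=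
      intervalIntegral.integral_nonneg hπ.le (fun t _ => sq_nonneg _)
    have hB0 : (0:ℝ) ≤ ∫ t in (0:ℝ)..π,
        ‖∑ k ∈ Finset.Icc 1 n, (Real.sin (↑k * t) * Real.sin (↑k * s)) • x k‖^2 :=
      intervalIntegral.integral_nonneg hπ.le (fun t _ => sq_nonneg _)
    have h1 := pow_le_pow_left₀ (Real.sqrt_nonneg _) hs 2
    rw [Real.sq_sqrt (mul_nonneg (by positivity) hA0), mul_pow,
      Real.sq_sqrt (mul_nonneg (by positivity) hB0)] at h1
    have hfrac : (0:ℝ) < 2/π := by positivity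
    refine le_of_mul_le_mul_left ?_ hfrac
    calc 2/π * ∫ (t : ℝ) in (0:ℝ)..π,
          ‖∑ k ∈ Finset.Icc 1 n, (Real.cos (↑k * t) * Real.sin (↑k * s)) • T (x k)‖ ^ 2
        ≤ c ^ 2 * (2/π * ∫ (t : ℝ) in (0:ℝ)..π,
          ‖∑ k ∈ Finset.Icc 1 n, (Real.sin (↑k * t) * Real.sin (↑k * s)) • x k‖ ^ 2) := h1
      _ = 2/π * (c ^ 2 * ∫ (t : ℝ) in (0:ℝ)..π,
          ‖∑ k ∈ Finset.Icc 1 n, (Real.sin (↑k * t) * Real.sin (↑k * s)) • x k‖ ^ 2) := by ring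
  have hcore := core n x (fun k => T (x k)) c hB
  unfold sinSum cosSum at hcore
  beta_reduce at hcore
  have key : (2/π) * (∫ t in (0:ℝ)..π, ‖∑ k ∈ Finset.Icc 1 n, Real.sin (↑k * t) • T (x k)‖^2)
      ≤ (2*c)^2 * ((2/π) * ∫ t in (0:ℝ)..π, ‖∑ k ∈ Finset.Icc 1 n, Real.cos (↑k * t) • x k‖^2) := by
    have h2π : (0:ℝ) ≤ 2/π := by positivity
    have := mul_le_mul_of_nonneg_left hcore h2π
    calc (2/π) * (∫ t in (0:ℝ)..π, ‖∑ k ∈ Finset.Icc 1 n, Real.sin (↑k * t) • T (x k)‖^2)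
        ≤ (2/π) * (4*c^2 * ∫ t in (0:ℝ)..π, ‖∑ k ∈ Finset.Icc 1 n, Real.cos (↑k * t) • x k‖^2) := this
      _ = (2*c)^2 * ((2/π) * ∫ t in (0:ℝ)..π, ‖∑ k ∈ Finset.Icc 1 n, Real.cos (↑k * t) • x k‖^2) := by
          ring
  calc Real.sqrt ((2/π) * ∫ t in (0:ℝ)..π,
        ‖∑ k ∈ Finset.Icc 1 n, Real.sin (↑k * t) • T (x k)‖^2)
      ≤ Real.sqrt ((2*c)^2 * ((2/π) * ∫ t in (0:ℝ)..π,
          ‖∑ k ∈ Finset.Icc 1 n, Real.cos (↑k * t) • x k‖^2)) := Real.sqrt_le_sqrt key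
    _ = 2 * c * Real.sqrt ((2/π) * ∫ t in (0:ℝ)..π,
          ‖∑ k ∈ Finset.Icc 1 n, Real.cos (↑k * t) • x k‖^2) := by
        rw [Real.sqrt_mul (sq_nonneg _), Real.sqrt_sq (by linarith : (0:ℝ) ≤ 2*c)]
end

section
/- Let X, Y be Banach spaces, T : X → Y bounded linear, A_n ⊂ L_2(M,μ) and B_n ⊂ L_2(N,ν) orthonormal systems. Then δ(T' | conj(A_n), conj(B_n)) ≤ δ(T | B_n, A_n), where T' : Y' → X' is the adjoint operator and conj(A_n) is the system of complex conjugates (ā_1,...,ā_n). Moreover equality holds: δ(T|B_n,A_n) = δ(T'|conj(A_n),conj(B_n)). -/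
open MeasureTheory NormedSpace Filter
open scoped ENNReal NNReal

section helpers

variable {α : Type*} [MeasurableSpace α] {μ : Measure α}

private lemma one_eq_half_add_half : (1 : ℝ≥0∞) / 1 = 1 / 2 + 1 / 2 := by
  rw [ENNReal.add_halves, one_div_one]

lemma integrable_smul_L2 {𝕜 E : Type*} [NontriviallyNormedField 𝕜] [NormedAddCommGroup E]
    [NormedSpace 𝕜 E] {c : α → 𝕜} {f : α → E} (hc : MemLp c 2 μ) (hf : MemLp f 2 μ) :
    Integrable (fun s => c s • f s) μ :=
  memLp_one_iff_integrable.mp (hf.smul (r := 1) hc)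

lemma memLp_smul_const {E : Type*} [NormedAddCommGroup E] [NormedSpace ℂ E]
    {c : α → ℂ} (hc : MemLp c 2 μ) (v : E) : MemLp (fun s => c s • v) 2 μ :=
  (memLp_top_const v).smul (r := 2) hc

lemma memLp_conj {c : α → ℂ} (hc : MemLp c 2 μ) :
    MemLp (fun s => (starRingEnd ℂ) (c s)) 2 μ :=
  hc.of_le (RCLike.continuous_conj.comp_aestronglyMeasurable hc.1)
    (Filter.Eventually.of_forall fun s => by simp)

lemma integral_mul_le_sqrt {φ ψ : α → ℝ} (hφ : MemLp φ 2 μ) (hψ : MemLp ψ 2 μ) :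
    ∫ s, φ s * ψ s ∂μ ≤ Real.sqrt (∫ s, φ s ^ 2 ∂μ) * Real.sqrt (∫ s, ψ s ^ 2 ∂μ) := by
  set F := hφ.toLp φ with hF
  set G := hψ.toLp ψ with hG
  have hFG : ∫ s, φ s * ψ s ∂μ = (inner ℝ F G : ℝ) := by
    rw [L2.inner_def]
    refine integral_congr_ae ?_
    filter_upwards [hφ.coeFn_toLp, hψ.coeFn_toLp] with s h1 h2
    simp [hF, hG, h1, h2, RCLike.inner_apply, mul_comm]
  have hsq : ∀ (θ : α → ℝ) (hθ : MemLp θ 2 μ),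
      Real.sqrt (∫ s, θ s ^ 2 ∂μ) = ‖hθ.toLp θ‖ := by
    intro θ hθ
    have h1 : ∫ s, θ s ^ 2 ∂μ = (inner ℝ (hθ.toLp θ) (hθ.toLp θ) : ℝ) := by
      rw [L2.inner_def]
      refine integral_congr_ae ?_
      filter_upwards [hθ.coeFn_toLp] with s h2
      simp [h2, RCLike.inner_apply, pow_two]
    rw [h1, real_inner_self_eq_norm_sq, Real.sqrt_sq (norm_nonneg _)]
  rw [hFG, hsq φ hφ, hsq ψ hψ]
  exact real_inner_le_norm F G

end helpers

open scoped ENNReal NNReal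

lemma exists_norming_family {Z P : Type*} [NormedAddCommGroup Z] [NormedSpace ℂ Z]
    [NormedAddCommGroup P] [NormedSpace ℂ P]
    (j : Z →ₗᵢ[ℂ] (P →L[ℂ] ℂ)) {m : ℕ} (z : Fin m → Z) :
    ∃ D : ℕ → P, (∀ i, ‖D i‖ ≤ 1) ∧
      ∀ v ∈ Submodule.span ℂ (Set.range z), ∀ r : ℝ, r < ‖v‖ → ∃ i, r < ‖j v (D i)‖ := by
  haveI : FiniteDimensional ℂ (Submodule.span ℂ (Set.range z)) :=
    FiniteDimensional.span_of_finite ℂ (Set.finite_range z)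
  obtain ⟨Q, hQc, hQd⟩ := TopologicalSpace.exists_countable_dense
    (Submodule.span ℂ (Set.range z))
  have hQne : Q.Nonempty := hQd.nonempty
  obtain ⟨e, he⟩ := Set.Countable.exists_eq_range hQc hQne
  have key : ∀ (q nn : ℕ), ∃ w : P, ‖w‖ ≤ 1 ∧ ‖(e q : Z)‖ - 1/(nn+1) < ‖j (e q) w‖ := by
    intro q nn
    have h1 : ‖(e q : Z)‖ - 1/(nn+1 : ℝ) < ‖j (e q : Z)‖ := by
      rw [j.norm_map]
      have : (0:ℝ) < 1/(nn+1 : ℝ) := by positivity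
      linarith
    obtain ⟨w, hw1, hw2⟩ := (j (e q)).exists_lt_apply_of_lt_opNorm h1
    exact ⟨w, hw1.le, hw2⟩
  choose D hD1 hD2 using key
  refine ⟨fun i => D i.unpair.1 i.unpair.2, fun i => hD1 _ _, ?_⟩
  intro v hv r hr
  set δ : ℝ := (‖v‖ - r)/3 with hδdef
  have hδ : 0 < δ := by rw [hδdef]; linarith
  have hcl : (⟨v, hv⟩ : Submodule.span ℂ (Set.range z)) ∈ closure Q := hQd _
  rw [Metric.mem_closure_iff] at hcl
  obtain ⟨q', hq'Q, hq'd⟩ := hcl δ hδ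
  rw [he] at hq'Q
  obtain ⟨q, rfl⟩ := hq'Q
  have hdist : ‖(e q : Z) - v‖ < δ := by
    have := hq'd
    rw [dist_comm, Subtype.dist_eq, dist_eq_norm] at this
    simpa using this
  obtain ⟨nn, hnn⟩ := exists_nat_one_div_lt hδ
  refine ⟨Nat.pair q nn, ?_⟩
  simp only [Nat.unpair_pair]
  have e1 : ‖(e q : Z)‖ - 1/(nn+1) < ‖j (e q) (D q nn)‖ := hD2 q nn
  have e3 : ‖j ((e q : Z) - v) (D q nn)‖ ≤ ‖(e q : Z) - v‖ := by
    calc ‖j ((e q : Z) - v) (D q nn)‖ ≤ ‖j ((e q : Z) - v)‖ * ‖D q nn‖ :=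
          (j ((e q : Z) - v)).le_opNorm _
      _ ≤ ‖j ((e q : Z) - v)‖ * 1 := by
          have := hD1 q nn
          have h0 : (0:ℝ) ≤ ‖j ((e q : Z) - v)‖ := norm_nonneg _
          nlinarith
      _ = ‖(e q : Z) - v‖ := by rw [mul_one, j.norm_map]
  have e2 : ‖j (e q : Z) (D q nn)‖ - ‖j ((e q : Z) - v) (D q nn)‖ ≤ ‖j v (D q nn)‖ := by
    have : j (e q : Z) (D q nn) - j ((e q : Z) - v) (D q nn) = j v (D q nn) := by
      rw [← ContinuousLinearMap.sub_apply, ← map_sub, sub_sub_cancel]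
    calc ‖j (e q : Z) (D q nn)‖ - ‖j ((e q : Z) - v) (D q nn)‖
        ≤ ‖j (e q : Z) (D q nn) - j ((e q : Z) - v) (D q nn)‖ := norm_sub_norm_le _ _
      _ = ‖j v (D q nn)‖ := by rw [this]
  have e4 : ‖v‖ - δ ≤ ‖(e q : Z)‖ := by
    have := norm_sub_norm_le v (e q : Z)
    have h5 : ‖v - (e q : Z)‖ = ‖(e q : Z) - v‖ := norm_sub_rev _ _
    linarith
  linarith


set_option maxHeartbeats 1000000 in
lemma lemB {α : Type*} [MeasurableSpace α] {μ : Measure α} {Z P : Type*}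
    [NormedAddCommGroup Z] [NormedSpace ℂ Z] [NormedAddCommGroup P] [NormedSpace ℂ P]
    (j : Z →ₗᵢ[ℂ] (P →L[ℂ] ℂ)) {m : ℕ} (z : Fin m → Z) (c : Fin m → α → ℂ)
    (hc : ∀ k, MemLp (c k) 2 μ) {C : ℝ} (hC : 0 ≤ C)
    (hpair : ∀ f : α → P, MemLp f 2 μ →
      ‖∫ s, (j (∑ k, c k s • z k)) (f s) ∂μ‖ ≤ C * Real.sqrt (∫ s, ‖f s‖ ^ 2 ∂μ)) :
    Real.sqrt (∫ s, ‖∑ k, c k s • z k‖ ^ 2 ∂μ) ≤ C := by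
  classical
  set h : α → Z := fun s => ∑ k, c k s • z k with hh_def
  set c' : Fin m → α → ℂ := fun k => (hc k).1.mk (c k) with hc'_def
  have hc's : ∀ k, StronglyMeasurable (c' k) := fun k => (hc k).1.stronglyMeasurable_mk
  have hcc' : ∀ᵐ s ∂μ, ∀ k, c k s = c' k s :=
    ae_all_iff.2 fun k => (hc k).1.ae_eq_mk
  set h' : α → Z := fun s => ∑ k, c' k s • z k with hh'_def
  have hhh' : h =ᵐ[μ] h' := by
    filter_upwards [hcc'] with s hs
    simp only [hh_def, hh'_def]
    exact Finset.sum_congr rfl fun k _ => by rw [hs k]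
  have hmemh : MemLp h 2 μ := by
    have h1 := memLp_finset_sum' (μ := μ) Finset.univ
      (fun k (_ : k ∈ Finset.univ) => memLp_smul_const (hc k) (z k))
    have heq : (∑ i : Fin m, fun s => c i s • z i) = h := by
      funext s; simp [hh_def]
    rwa [heq] at h1
  have hmemh' : MemLp h' 2 μ := hmemh.ae_eq hhh'
  have hsm_h' : StronglyMeasurable h' :=
    Finset.stronglyMeasurable_fun_sum _ fun k _ => (hc's k).smul_const _
  have hspan : ∀ s, h' s ∈ Submodule.span ℂ (Set.range z) := fun s =>
    Submodule.sum_mem _ fun k _ => Submodule.smul_mem _ _ (Submodule.subset_span ⟨k, rfl⟩)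
  obtain ⟨D, hD1, hD2⟩ := exists_norming_family j z
  set I : ℝ := ∫ s, ‖h s‖ ^ 2 ∂μ with hI_def
  have hI0 : 0 ≤ I := integral_nonneg fun s => sq_nonneg _
  have hII' : I = ∫ s, ‖h' s‖ ^ 2 ∂μ :=
    integral_congr_ae (hhh'.fun_comp fun x => ‖x‖ ^ 2)
  have hinth'2 : Integrable (fun s => ‖h' s‖ ^ 2) μ := by
    have := integrable_smul_L2 (𝕜 := ℝ) hmemh'.norm hmemh'.norm
    simpa [smul_eq_mul, pow_two] using this
  -- the key estimate for each ε
  have key : ∀ ε : ℝ, 0 < ε → ε < 1 → (1 - ε) ^ 2 * I ≤ C * Real.sqrt I := by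
    intro ε hε0 hε1
    have hex : ∀ s, ∃ i, (1 - ε) * ‖h' s‖ ≤ ‖j (h' s) (D i)‖ := by
      intro s
      rcases eq_or_lt_of_le (norm_nonneg (h' s)) with h0 | h0
      · exact ⟨0, by rw [← h0]; simpa using norm_nonneg _⟩
      · have hlt : (1 - ε) * ‖h' s‖ < ‖h' s‖ := by nlinarith
        obtain ⟨i, hi⟩ := hD2 (h' s) (hspan s) _ hlt
        exact ⟨i, hi.le⟩
    set K : α → ℕ := fun s => Nat.find (hex s) with hK_def
    have happ : ∀ (s : α) (i : ℕ), (j (h' s)) (D i) = ∑ k, c' k s * (j (z k)) (D i) := by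
      intro s i
      simp only [hh'_def, map_sum, _root_.map_smul]
      simp [ContinuousLinearMap.sum_apply, ContinuousLinearMap.smul_apply, smul_eq_mul]
    have hmeas_i : ∀ i : ℕ, Measurable fun s => (j (h' s)) (D i) := by
      intro i
      have : (fun s => (j (h' s)) (D i)) = fun s => ∑ k, c' k s * (j (z k)) (D i) := by
        funext s; exact happ s i
      rw [this]
      exact Finset.measurable_sum _ fun k _ => ((hc's k).measurable).mul_const _
    have hmeas_nh' : Measurable fun s => ‖h' s‖ := hsm_h'.norm.measurable
    have hKmeas : Measurable K := by
      refine measurable_find hex fun i => ?_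
      exact measurableSet_le (hmeas_nh'.const_mul _) (hmeas_i i).norm
    set v : α → ℂ := fun s => (j (h' s)) (D (K s)) with hv_def
    have hvmeas : Measurable v := by
      have : v = fun s => ∑ k, c' k s * (j (z k)) (D (K s)) := by
        funext s; exact happ s (K s)
      rw [this]
      refine Finset.measurable_sum _ fun k _ => ((hc's k).measurable).mul ?_
      exact (measurable_from_top (f := fun i => (j (z k)) (D i))).comp hKmeas
    have hvle : ∀ s, ‖v s‖ ≤ ‖h' s‖ := by
      intro s
      calc ‖v s‖ ≤ ‖j (h' s)‖ * ‖D (K s)‖ := (j (h' s)).le_opNorm _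
        _ ≤ ‖j (h' s)‖ * 1 := by
            have := hD1 (K s); have h0 : (0:ℝ) ≤ ‖j (h' s)‖ := norm_nonneg _; nlinarith
        _ = ‖h' s‖ := by rw [mul_one, j.norm_map]
    have hvge : ∀ s, (1 - ε) * ‖h' s‖ ≤ ‖v s‖ := fun s => Nat.find_spec (hex s)
    set f : α → P := fun s => (starRingEnd ℂ) (v s) • D (K s) with hf_def
    have hfsm : StronglyMeasurable f := by
      borelize P
      have hDK : StronglyMeasurable fun s => D (K s) := by
        rw [stronglyMeasurable_iff_measurable_separable]
        refine ⟨(measurable_from_top (f := D)).comp hKmeas, ?_⟩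
        exact ((Set.countable_range D).mono (Set.range_comp_subset_range K D)).isSeparable
      exact ((RCLike.continuous_conj.measurable.comp hvmeas).stronglyMeasurable).smul hDK
    have hfle : ∀ s, ‖f s‖ ≤ ‖h' s‖ := by
      intro s
      rw [hf_def]
      calc ‖(starRingEnd ℂ) (v s) • D (K s)‖ = ‖v s‖ * ‖D (K s)‖ := by
            rw [norm_smul]; simp
        _ ≤ ‖v s‖ * 1 := by
            have := hD1 (K s); have h0 : (0:ℝ) ≤ ‖v s‖ := norm_nonneg _; nlinarith
        _ ≤ ‖h' s‖ := by rw [mul_one]; exact hvle s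
    have hfmem : MemLp f 2 μ :=
      hmemh'.of_le hfsm.aestronglyMeasurable (Eventually.of_forall fun s => by
        simpa using hfle s)
    have hpoint : ∀ s, (j (h' s)) (f s) = ((‖v s‖ ^ 2 : ℝ) : ℂ) := by
      intro s
      rw [hf_def]
      have : (j (h' s)) ((starRingEnd ℂ) (v s) • D (K s))
          = (starRingEnd ℂ) (v s) * v s := by
        rw [_root_.map_smul, smul_eq_mul]
      rw [this, RCLike.conj_mul]
      norm_cast
    have hvint : Integrable (fun s => ‖v s‖ ^ 2) μ := by
      refine hinth'2.mono ((hvmeas.norm.pow_const 2).aestronglyMeasurable) ?_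
      refine Eventually.of_forall fun s => ?_
      have h1 : ‖v s‖ ^ 2 ≤ ‖h' s‖ ^ 2 := by
        have := hvle s; have h0 : (0:ℝ) ≤ ‖v s‖ := norm_nonneg _; nlinarith
      have h2 : (0:ℝ) ≤ ‖v s‖ ^ 2 := sq_nonneg _
      have h3 : (0:ℝ) ≤ ‖h' s‖ ^ 2 := sq_nonneg _
      rw [Real.norm_eq_abs, Real.norm_eq_abs, abs_of_nonneg h2, abs_of_nonneg h3]
      exact h1
    have hIeq : ∫ s, (j (h s)) (f s) ∂μ = ((∫ s, ‖v s‖ ^ 2 ∂μ : ℝ) : ℂ) := by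
      have h1 : ∫ s, (j (h s)) (f s) ∂μ = ∫ s, (j (h' s)) (f s) ∂μ := by
        refine integral_congr_ae ?_
        filter_upwards [hhh'] with s hs
        rw [hs]
      rw [h1]
      have h2 : ∫ s, (j (h' s)) (f s) ∂μ = ∫ s, ((‖v s‖ ^ 2 : ℝ) : ℂ) ∂μ := by
        refine integral_congr_ae (Eventually.of_forall fun s => hpoint s)
      rw [h2]
      exact integral_ofReal
    have hlow : (1 - ε) ^ 2 * (∫ s, ‖h' s‖ ^ 2 ∂μ) ≤ ∫ s, ‖v s‖ ^ 2 ∂μ := by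
      rw [← integral_const_mul]
      refine integral_mono (hinth'2.const_mul _) hvint fun s => ?_
      have h1 := hvge s
      have h2 : (0:ℝ) ≤ (1 - ε) * ‖h' s‖ := mul_nonneg (by linarith) (norm_nonneg _)
      nlinarith [norm_nonneg (v s)]
    have hfnorm : ∫ s, ‖f s‖ ^ 2 ∂μ ≤ ∫ s, ‖h' s‖ ^ 2 ∂μ := by
      have hintf2 : Integrable (fun s => ‖f s‖ ^ 2) μ := by
        have := integrable_smul_L2 (𝕜 := ℝ) hfmem.norm hfmem.norm
        simpa [smul_eq_mul, pow_two] using this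
      refine integral_mono hintf2 hinth'2 fun s => ?_
      have := hfle s; have h0 : (0:ℝ) ≤ ‖f s‖ := norm_nonneg _; nlinarith
    have hbound := hpair f hfmem
    rw [hIeq] at hbound
    have hvnn : 0 ≤ ∫ s, ‖v s‖ ^ 2 ∂μ := integral_nonneg fun s => sq_nonneg _
    have hnorm_eq : ‖((∫ s, ‖v s‖ ^ 2 ∂μ : ℝ) : ℂ)‖ = ∫ s, ‖v s‖ ^ 2 ∂μ := by
      rw [Complex.norm_real, Real.norm_eq_abs, abs_of_nonneg hvnn]
    rw [hnorm_eq] at hbound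
    calc (1 - ε) ^ 2 * I = (1 - ε) ^ 2 * ∫ s, ‖h' s‖ ^ 2 ∂μ := by rw [hII']
      _ ≤ ∫ s, ‖v s‖ ^ 2 ∂μ := hlow
      _ ≤ C * Real.sqrt (∫ s, ‖f s‖ ^ 2 ∂μ) := hbound
      _ ≤ C * Real.sqrt (∫ s, ‖h' s‖ ^ 2 ∂μ) :=
          mul_le_mul_of_nonneg_left (Real.sqrt_le_sqrt hfnorm) hC
      _ = C * Real.sqrt I := by rw [hII']
  -- pass to the limit ε → 0
  have hlim : I ≤ C * Real.sqrt I := by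
    have h0 : Tendsto (fun nn : ℕ => 1 / ((nn : ℝ) + 2)) atTop (nhds 0) := by
      have := (tendsto_one_div_add_atTop_nhds_zero_nat (𝕜 := ℝ)).comp (tendsto_add_atTop_nat 1)
      refine this.congr fun nn => ?_
      simp only [Function.comp_apply]
      push_cast
      ring_nf
    have h1 : Tendsto (fun nn : ℕ => (1 - 1 / ((nn : ℝ) + 2)) ^ 2 * I) atTop (nhds I) := by
      have hcont : Tendsto (fun x : ℝ => (1 - x) ^ 2 * I) (nhds 0) (nhds I) := by
        have : Continuous fun x : ℝ => (1 - x) ^ 2 * I :=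
          ((continuous_const.sub continuous_id).pow 2).mul continuous_const
        have h2 := this.tendsto 0
        simpa using h2
      exact hcont.comp h0
    refine le_of_tendsto' h1 fun nn => ?_
    refine key _ (by positivity) ?_
    rw [div_lt_one (by positivity)]
    have : (0:ℝ) ≤ (nn : ℝ) := Nat.cast_nonneg nn
    linarith
  rcases eq_or_lt_of_le hI0 with h0 | h0
  · rw [← h0]; simpa using hC
  · have hs0 : 0 < Real.sqrt I := Real.sqrt_pos.2 h0
    have : Real.sqrt I * Real.sqrt I ≤ C * Real.sqrt I := by
      rw [Real.mul_self_sqrt hI0]; exact hlim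
    exact le_of_mul_le_mul_right this hs0


set_option maxHeartbeats 1000000 in
lemma pairing_eq {X Y : Type*} [NormedAddCommGroup X] [NormedSpace ℂ X] [CompleteSpace X]
    [NormedAddCommGroup Y] [NormedSpace ℂ Y] [CompleteSpace Y]
    {M N : Type*} [MeasurableSpace M] [MeasurableSpace N]
    {μ : Measure M} {ν : Measure N} {n : ℕ} {a : Fin n → M → ℂ} {b : Fin n → N → ℂ}
    (ha : ∀ i, MemLp (a i) 2 μ) (hb : ∀ i, MemLp (b i) 2 ν) (T : X →L[ℂ] Y)
    {f : M → X} (hf : MemLp f 2 μ) {g : N → StrongDual ℂ Y} (hg : MemLp g 2 ν) :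
    ∫ s, (∑ k, (starRingEnd ℂ) (a k s) • ((∫ t, b k t • g t ∂ν).comp T)) (f s) ∂μ
      = ∫ t, (g t) (∑ k, b k t • T (∫ s, (starRingEnd ℂ) (a k s) • f s ∂μ)) ∂ν := by
  set u : Fin n → X := fun k => ∫ s, (starRingEnd ℂ) (a k s) • f s ∂μ with hu_def
  set G : Fin n → StrongDual ℂ Y := fun k => ∫ t, b k t • g t ∂ν with hG_def
  have hint1 : ∀ k, Integrable (fun s => (starRingEnd ℂ) (a k s) • f s) μ :=
    fun k => integrable_smul_L2 (memLp_conj (ha k)) hf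
  have hint2 : ∀ k, Integrable (fun t => b k t • g t) ν :=
    fun k => integrable_smul_L2 (hb k) hg
  have hL : ∫ s, (∑ k, (starRingEnd ℂ) (a k s) • ((G k).comp T)) (f s) ∂μ
      = ∑ k, (G k) (T (u k)) := by
    have hptw : ∀ s, (∑ k, (starRingEnd ℂ) (a k s) • ((G k).comp T)) (f s)
        = ∑ k, ((G k).comp T) ((starRingEnd ℂ) (a k s) • f s) := by
      intro s
      rw [ContinuousLinearMap.sum_apply]
      refine Finset.sum_congr rfl fun k _ => ?_
      rw [ContinuousLinearMap.smul_apply, _root_.map_smul]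
    calc ∫ s, (∑ k, (starRingEnd ℂ) (a k s) • ((G k).comp T)) (f s) ∂μ
        = ∫ s, ∑ k, ((G k).comp T) ((starRingEnd ℂ) (a k s) • f s) ∂μ := by
          exact integral_congr_ae (Eventually.of_forall hptw)
      _ = ∑ k, ∫ s, ((G k).comp T) ((starRingEnd ℂ) (a k s) • f s) ∂μ := by
          refine integral_finset_sum _ fun k _ => ?_
          exact ((G k).comp T).integrable_comp (hint1 k)
      _ = ∑ k, (G k) (T (u k)) := by
          refine Finset.sum_congr rfl fun k _ => ?_
          rw [ContinuousLinearMap.integral_comp_comm _ (hint1 k)]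
          rfl
  have hR : ∫ t, (g t) (∑ k, b k t • T (u k)) ∂ν = ∑ k, (G k) (T (u k)) := by
    have hptw : ∀ t, (g t) (∑ k, b k t • T (u k))
        = ∑ k, ((ContinuousLinearMap.apply ℂ ℂ (T (u k))) (b k t • g t)) := by
      intro t
      rw [map_sum]
      refine Finset.sum_congr rfl fun k _ => ?_
      rw [_root_.map_smul]
      simp [ContinuousLinearMap.apply_apply, smul_eq_mul]
    calc ∫ t, (g t) (∑ k, b k t • T (u k)) ∂ν
        = ∫ t, ∑ k, (ContinuousLinearMap.apply ℂ ℂ (T (u k))) (b k t • g t) ∂ν := by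
          exact integral_congr_ae (Eventually.of_forall hptw)
      _ = ∑ k, ∫ t, (ContinuousLinearMap.apply ℂ ℂ (T (u k))) (b k t • g t) ∂ν := by
          refine integral_finset_sum _ fun k _ => ?_
          exact (ContinuousLinearMap.apply ℂ ℂ (T (u k))).integrable_comp (hint2 k)
      _ = ∑ k, (G k) (T (u k)) := by
          refine Finset.sum_congr rfl fun k _ => ?_
          rw [ContinuousLinearMap.integral_comp_comm _ (hint2 k)]
          rfl
  rw [hL, hR]


/-- Duality: `δ(T' | conj 𝒜_n, conj ℬ_n) ≤ δ(T | ℬ_n, 𝒜_n)`, and in fact equality holds.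
Here the `δ`-ideal norms are realized as infima of the sets of admissible constants, and
the dual operator `T' : Y' → X'` acts by `g ↦ g ∘ T`. -/
theorem stmt14 {X Y : Type*} [NormedAddCommGroup X] [NormedSpace ℂ X] [CompleteSpace X]
    [NormedAddCommGroup Y] [NormedSpace ℂ Y] [CompleteSpace Y]
    {M N : Type*} [MeasurableSpace M] [MeasurableSpace N]
    (μ : Measure M) (ν : Measure N)
    {n : ℕ} (a : Fin n → M → ℂ) (b : Fin n → N → ℂ)
    (ha : ∀ i, MemLp (a i) 2 μ) (hb : ∀ i, MemLp (b i) 2 ν)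
    (horth_a : ∀ i j, ∫ s, a i s * (starRingEnd ℂ) (a j s) ∂μ = if i = j then 1 else 0)
    (horth_b : ∀ i j, ∫ t, b i t * (starRingEnd ℂ) (b j t) ∂ν = if i = j then 1 else 0)
    (T : X →L[ℂ] Y) :
    sInf {c : ℝ | 0 ≤ c ∧ ∀ g : N → StrongDual ℂ Y, MemLp g 2 ν →
        Real.sqrt (∫ s, ‖∑ k, (starRingEnd ℂ) (a k s) •
            ((∫ t, b k t • g t ∂ν).comp T)‖ ^ 2 ∂μ) ≤
          c * Real.sqrt (∫ t, ‖g t‖ ^ 2 ∂ν)} ≤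
      sInf {c : ℝ | 0 ≤ c ∧ ∀ f : M → X, MemLp f 2 μ →
        Real.sqrt (∫ t, ‖∑ k, b k t •
            T (∫ s, (starRingEnd ℂ) (a k s) • f s ∂μ)‖ ^ 2 ∂ν) ≤
          c * Real.sqrt (∫ s, ‖f s‖ ^ 2 ∂μ)} ∧
    sInf {c : ℝ | 0 ≤ c ∧ ∀ g : N → StrongDual ℂ Y, MemLp g 2 ν →
        Real.sqrt (∫ s, ‖∑ k, (starRingEnd ℂ) (a k s) •
            ((∫ t, b k t • g t ∂ν).comp T)‖ ^ 2 ∂μ) ≤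
          c * Real.sqrt (∫ t, ‖g t‖ ^ 2 ∂ν)} =
      sInf {c : ℝ | 0 ≤ c ∧ ∀ f : M → X, MemLp f 2 μ →
        Real.sqrt (∫ t, ‖∑ k, b k t •
            T (∫ s, (starRingEnd ℂ) (a k s) • f s ∂μ)‖ ^ 2 ∂ν) ≤
          c * Real.sqrt (∫ s, ‖f s‖ ^ 2 ∂μ)} := by
  have hset : {c : ℝ | 0 ≤ c ∧ ∀ g : N → StrongDual ℂ Y, MemLp g 2 ν →
        Real.sqrt (∫ s, ‖∑ k, (starRingEnd ℂ) (a k s) •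
            ((∫ t, b k t • g t ∂ν).comp T)‖ ^ 2 ∂μ) ≤
          c * Real.sqrt (∫ t, ‖g t‖ ^ 2 ∂ν)}
      = {c : ℝ | 0 ≤ c ∧ ∀ f : M → X, MemLp f 2 μ →
        Real.sqrt (∫ t, ‖∑ k, b k t •
            T (∫ s, (starRingEnd ℂ) (a k s) • f s ∂μ)‖ ^ 2 ∂ν) ≤
          c * Real.sqrt (∫ s, ‖f s‖ ^ 2 ∂μ)} := by
    ext c
    simp only [Set.mem_setOf_eq]
    constructor
    · rintro ⟨hc0, hdual⟩
      refine ⟨hc0, fun f hf => ?_⟩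
      refine lemB (inclusionInDoubleDualLi ℂ (E := Y)) _ b hb
        (mul_nonneg hc0 (Real.sqrt_nonneg _)) ?_
      intro g hg
      have hrw : ∀ t : N, (inclusionInDoubleDualLi ℂ (E := Y)
          (∑ k, b k t • T (∫ s, (starRingEnd ℂ) (a k s) • f s ∂μ))) (g t)
          = (g t) (∑ k, b k t • T (∫ s, (starRingEnd ℂ) (a k s) • f s ∂μ)) := fun t => rfl
      rw [integral_congr_ae (Filter.Eventually.of_forall hrw),
        ← pairing_eq ha hb T hf hg]
      -- bound the pairing through the `X'`-valued function
      have hhg : MemLp (fun s => ∑ k, (starRingEnd ℂ) (a k s) •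
          ((∫ t, b k t • g t ∂ν).comp T)) 2 μ := by
        have h1 := memLp_finset_sum' (μ := μ) Finset.univ
          (fun k (_ : k ∈ Finset.univ) => memLp_smul_const (memLp_conj (ha k))
            ((∫ t, b k t • g t ∂ν).comp T))
        have heq : (∑ k : Fin n, fun s => (starRingEnd ℂ) (a k s) •
            ((∫ t, b k t • g t ∂ν).comp T))
            = fun s => ∑ k, (starRingEnd ℂ) (a k s) • ((∫ t, b k t • g t ∂ν).comp T) := by
          funext s; simp
        rwa [heq] at h1
      have h1 : ‖∫ s, (∑ k, (starRingEnd ℂ) (a k s) •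
          ((∫ t, b k t • g t ∂ν).comp T)) (f s) ∂μ‖
          ≤ ∫ s, ‖∑ k, (starRingEnd ℂ) (a k s) • ((∫ t, b k t • g t ∂ν).comp T)‖ * ‖f s‖ ∂μ := by
        refine norm_integral_le_of_norm_le ?_ (Filter.Eventually.of_forall fun s => ?_)
        · simpa [smul_eq_mul] using integrable_smul_L2 (𝕜 := ℝ) hhg.norm hf.norm
        · exact ContinuousLinearMap.le_opNorm _ _
      have h2 := integral_mul_le_sqrt (μ := μ) hhg.norm hf.norm
      have h3 := hdual g hg
      have h4 : Real.sqrt (∫ s, ‖f s‖ ^ 2 ∂μ) ≥ 0 := Real.sqrt_nonneg _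
      calc ‖∫ s, (∑ k, (starRingEnd ℂ) (a k s) •
            ((∫ t, b k t • g t ∂ν).comp T)) (f s) ∂μ‖
          ≤ ∫ s, ‖∑ k, (starRingEnd ℂ) (a k s) •
            ((∫ t, b k t • g t ∂ν).comp T)‖ * ‖f s‖ ∂μ := h1
        _ ≤ Real.sqrt (∫ s, ‖∑ k, (starRingEnd ℂ) (a k s) •
            ((∫ t, b k t • g t ∂ν).comp T)‖ ^ 2 ∂μ) * Real.sqrt (∫ s, ‖f s‖ ^ 2 ∂μ) := h2
        _ ≤ (c * Real.sqrt (∫ t, ‖g t‖ ^ 2 ∂ν)) * Real.sqrt (∫ s, ‖f s‖ ^ 2 ∂μ) :=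
            mul_le_mul_of_nonneg_right h3 h4
        _ = c * Real.sqrt (∫ s, ‖f s‖ ^ 2 ∂μ) * Real.sqrt (∫ t, ‖g t‖ ^ 2 ∂ν) := by ring
    · rintro ⟨hc0, hprimal⟩
      refine ⟨hc0, fun g hg => ?_⟩
      refine lemB (LinearIsometry.id : StrongDual ℂ X →ₗᵢ[ℂ] (X →L[ℂ] ℂ)) _
        (fun k s => (starRingEnd ℂ) (a k s)) (fun k => memLp_conj (ha k))
        (mul_nonneg hc0 (Real.sqrt_nonneg _)) ?_
      intro f hf
      have hrw : ∀ s : M, ((LinearIsometry.id : StrongDual ℂ X →ₗᵢ[ℂ] (X →L[ℂ] ℂ))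
          (∑ k, (starRingEnd ℂ) (a k s) • ((∫ t, b k t • g t ∂ν).comp T))) (f s)
          = (∑ k, (starRingEnd ℂ) (a k s) • ((∫ t, b k t • g t ∂ν).comp T)) (f s) :=
        fun s => rfl
      rw [integral_congr_ae (Filter.Eventually.of_forall hrw),
        pairing_eq ha hb T hf hg]
      have hH : MemLp (fun t => ∑ k, b k t •
          T (∫ s, (starRingEnd ℂ) (a k s) • f s ∂μ)) 2 ν := by
        have h1 := memLp_finset_sum' (μ := ν) Finset.univ
          (fun k (_ : k ∈ Finset.univ) => memLp_smul_const (hb k)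
            (T (∫ s, (starRingEnd ℂ) (a k s) • f s ∂μ)))
        have heq : (∑ k : Fin n, fun t => b k t •
            T (∫ s, (starRingEnd ℂ) (a k s) • f s ∂μ))
            = fun t => ∑ k, b k t • T (∫ s, (starRingEnd ℂ) (a k s) • f s ∂μ) := by
          funext t; simp
        rwa [heq] at h1
      have h1 : ‖∫ t, (g t) (∑ k, b k t •
          T (∫ s, (starRingEnd ℂ) (a k s) • f s ∂μ)) ∂ν‖
          ≤ ∫ t, ‖g t‖ * ‖∑ k, b k t • T (∫ s, (starRingEnd ℂ) (a k s) • f s ∂μ)‖ ∂ν := by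
        refine norm_integral_le_of_norm_le ?_ (Filter.Eventually.of_forall fun t => ?_)
        · simpa [smul_eq_mul] using integrable_smul_L2 (𝕜 := ℝ) hg.norm hH.norm
        · exact ContinuousLinearMap.le_opNorm _ _
      have h2 := integral_mul_le_sqrt (μ := ν) hg.norm hH.norm
      have h3 := hprimal f hf
      have h4 : Real.sqrt (∫ t, ‖g t‖ ^ 2 ∂ν) ≥ 0 := Real.sqrt_nonneg _
      calc ‖∫ t, (g t) (∑ k, b k t •
            T (∫ s, (starRingEnd ℂ) (a k s) • f s ∂μ)) ∂ν‖
          ≤ ∫ t, ‖g t‖ * ‖∑ k, b k t • T (∫ s, (starRingEnd ℂ) (a k s) • f s ∂μ)‖ ∂ν := h1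
        _ ≤ Real.sqrt (∫ t, ‖g t‖ ^ 2 ∂ν) * Real.sqrt (∫ t, ‖∑ k, b k t •
            T (∫ s, (starRingEnd ℂ) (a k s) • f s ∂μ)‖ ^ 2 ∂ν) := h2
        _ ≤ Real.sqrt (∫ t, ‖g t‖ ^ 2 ∂ν) * (c * Real.sqrt (∫ s, ‖f s‖ ^ 2 ∂μ)) :=
            mul_le_mul_of_nonneg_left h3 h4
        _ = c * Real.sqrt (∫ t, ‖g t‖ ^ 2 ∂ν) * Real.sqrt (∫ s, ‖f s‖ ^ 2 ∂μ) := by ring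
  rw [hset]
  exact ⟨le_rfl, rfl⟩
end
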